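/- arXiv:2504.13336 — 5 statements merged into one kernel-verified Lean document; each statement's English description precedes it below -/
import Mathlib

section
/- Fix points x_1,…,x_n ∈ ℝ^d. For each i let p_t(·|x_i) be a strictly positive probability density on ℝ^d for every t ∈ [0,1] and v_t(·|x_i) : ℝ^d → ℝ^d a vector field, and define p^n_t(x) = (1/n)∑_{i=1}^n p_t(x|x_i) and v^n_t(x) = ∑_{i=1}^n v_t(x|x_i) p_t(x|x_i)/∑_{j=1}^n p_t(x|x_j). Then for every measurable v̂ : [0,1]×ℝ^d → ℝ^d for which all integrals below are finite, the difference ∫_0^1 ∫ |v̂_t(x) − v^n_t(x)|² p^n_t(x) dx dt − ∫_0^1 (1/n)∑_{i=1}^n ∫ |v̂_t(x) − v_t(x|x_i)|² p_t(x|x_i) dx dt equals ∫_0^1 [∫ |v^n_t(x)|² p^n_t(x) dx − (1/n)∑_{i=1}^n ∫ |v_t(x|x_i)|² p_t(x|x_i) dx] dt, which does not depend on v̂. In particular, over any class of vector fields, the set of minimizers of the two objectives coincide. -/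
open MeasureTheory

noncomputable section

/-- The empirical probability path `p^n_t(x) = (1/n) ∑_{i=1}^n p_t(x|x_i)`. -/
def empPath {d n : ℕ} (p : ℝ → EuclideanSpace ℝ (Fin d) → EuclideanSpace ℝ (Fin d) → ℝ)
    (X : Fin n → EuclideanSpace ℝ (Fin d)) (t : ℝ) (x : EuclideanSpace ℝ (Fin d)) : ℝ :=
  (n : ℝ)⁻¹ * ∑ i, p t x (X i)

/-- The empirical vector field
`v^n_t(x) = ∑_{i=1}^n v_t(x|x_i) p_t(x|x_i) / ∑_{j=1}^n p_t(x|x_j)`. -/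
def empField {d n : ℕ} (p : ℝ → EuclideanSpace ℝ (Fin d) → EuclideanSpace ℝ (Fin d) → ℝ)
    (v : ℝ → EuclideanSpace ℝ (Fin d) → EuclideanSpace ℝ (Fin d) → EuclideanSpace ℝ (Fin d))
    (X : Fin n → EuclideanSpace ℝ (Fin d)) (t : ℝ) (x : EuclideanSpace ℝ (Fin d)) :
    EuclideanSpace ℝ (Fin d) :=
  (∑ j, p t x (X j))⁻¹ • ∑ i, p t x (X i) • v t x (X i)

/-- The empirical (unconditioned) Flow Matching objective
`ṽ ↦ ∫_0^1 ∫ |ṽ_t(x) − v^n_t(x)|² p^n_t(x) dx dt`. -/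
def FMobj {d n : ℕ} (p : ℝ → EuclideanSpace ℝ (Fin d) → EuclideanSpace ℝ (Fin d) → ℝ)
    (v : ℝ → EuclideanSpace ℝ (Fin d) → EuclideanSpace ℝ (Fin d) → EuclideanSpace ℝ (Fin d))
    (X : Fin n → EuclideanSpace ℝ (Fin d))
    (u : ℝ → EuclideanSpace ℝ (Fin d) → EuclideanSpace ℝ (Fin d)) : ℝ :=
  ∫ t in (0:ℝ)..1, ∫ x, ‖u t x - empField p v X t x‖ ^ 2 * empPath p X t x

/-- The empirical conditional Flow Matching objective
`ṽ ↦ ∫_0^1 (1/n)∑_i ∫ |ṽ_t(x) − v_t(x|x_i)|² p_t(x|x_i) dx dt`. -/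
def CFMobj {d n : ℕ} (p : ℝ → EuclideanSpace ℝ (Fin d) → EuclideanSpace ℝ (Fin d) → ℝ)
    (v : ℝ → EuclideanSpace ℝ (Fin d) → EuclideanSpace ℝ (Fin d) → EuclideanSpace ℝ (Fin d))
    (X : Fin n → EuclideanSpace ℝ (Fin d))
    (u : ℝ → EuclideanSpace ℝ (Fin d) → EuclideanSpace ℝ (Fin d)) : ℝ :=
  ∫ t in (0:ℝ)..1, (n : ℝ)⁻¹ * ∑ i, ∫ x, ‖u t x - v t x (X i)‖ ^ 2 * p t x (X i)

/-- `u` is an admissible competitor: it is measurable and all integrals appearing in the two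
Flow Matching objectives (and in the `u`-free remainder term) are finite. -/
def Admissible {d n : ℕ} (p : ℝ → EuclideanSpace ℝ (Fin d) → EuclideanSpace ℝ (Fin d) → ℝ)
    (v : ℝ → EuclideanSpace ℝ (Fin d) → EuclideanSpace ℝ (Fin d) → EuclideanSpace ℝ (Fin d))
    (X : Fin n → EuclideanSpace ℝ (Fin d))
    (u : ℝ → EuclideanSpace ℝ (Fin d) → EuclideanSpace ℝ (Fin d)) : Prop :=
  Measurable (fun q : ℝ × EuclideanSpace ℝ (Fin d) => u q.1 q.2) ∧
  (∀ t ∈ Set.Icc (0:ℝ) 1,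
    Integrable (fun x => ‖u t x - empField p v X t x‖ ^ 2 * empPath p X t x)) ∧
  (∀ t ∈ Set.Icc (0:ℝ) 1, ∀ i,
    Integrable (fun x => ‖u t x - v t x (X i)‖ ^ 2 * p t x (X i))) ∧
  (∀ t ∈ Set.Icc (0:ℝ) 1,
    Integrable (fun x => ‖empField p v X t x‖ ^ 2 * empPath p X t x)) ∧
  (∀ t ∈ Set.Icc (0:ℝ) 1, ∀ i,
    Integrable (fun x => ‖v t x (X i)‖ ^ 2 * p t x (X i))) ∧
  IntervalIntegrable
    (fun t => ∫ x, ‖u t x - empField p v X t x‖ ^ 2 * empPath p X t x) volume 0 1 ∧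
  IntervalIntegrable
    (fun t => (n : ℝ)⁻¹ * ∑ i, ∫ x, ‖u t x - v t x (X i)‖ ^ 2 * p t x (X i)) volume 0 1 ∧
  IntervalIntegrable
    (fun t => ∫ x, ‖empField p v X t x‖ ^ 2 * empPath p X t x) volume 0 1 ∧
  IntervalIntegrable
    (fun t => (n : ℝ)⁻¹ * ∑ i, ∫ x, ‖v t x (X i)‖ ^ 2 * p t x (X i)) volume 0 1


lemma aux_pointwise {E : Type*} [NormedAddCommGroup E] [InnerProductSpace ℝ E]
    {ι : Type*} [Fintype ι] [Nonempty ι] (a : E) (b : ι → E) (q : ι → ℝ)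
    (hq : ∀ i, 0 < q i) (c : ℝ) :
    ‖a - (∑ j, q j)⁻¹ • ∑ i, q i • b i‖ ^ 2 * (c * ∑ i, q i)
      - c * ∑ i, ‖a - b i‖ ^ 2 * q i
    = ‖(∑ j, q j)⁻¹ • ∑ i, q i • b i‖ ^ 2 * (c * ∑ i, q i)
      - c * ∑ i, ‖b i‖ ^ 2 * q i := by
  have hS : 0 < ∑ j, q j := Finset.sum_pos (fun i _ => hq i) Finset.univ_nonempty
  have hkey : (inner ℝ a ((∑ j, q j)⁻¹ • ∑ i, q i • b i) : ℝ) * (∑ j, q j)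
      = ∑ i, (inner ℝ a (b i) : ℝ) * q i := by
    rw [inner_smul_right, inner_sum]
    simp_rw [inner_smul_right]
    rw [mul_comm (∑ j, q j)⁻¹, mul_assoc, inv_mul_cancel₀ hS.ne', mul_one]
    exact Finset.sum_congr rfl fun i _ => mul_comm _ _
  set w := (∑ j, q j)⁻¹ • ∑ i, q i • b i with hw
  set S := ∑ j, q j with hSdef
  have h1 : ∑ i, ‖a‖ ^ 2 * q i = ‖a‖ ^ 2 * S := (Finset.mul_sum _ _ _).symm
  have h2 : ∑ i, 2 * (inner ℝ a (b i) : ℝ) * q i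
      = 2 * ∑ i, (inner ℝ a (b i) : ℝ) * q i := by
    rw [Finset.mul_sum]; exact Finset.sum_congr rfl fun i _ => mul_assoc _ _ _
  simp_rw [norm_sub_sq_real, add_mul, sub_mul, Finset.sum_add_distrib,
    Finset.sum_sub_distrib]
  linear_combination (-c) * h1 + c * h2 - 2 * c * hkey

lemma integral_sub_eq_of_eq {α : Type*} [MeasurableSpace α] {μ : Measure α}
    {f g F G : α → ℝ}
    (hf : Integrable f μ) (hg : Integrable g μ) (hF : Integrable F μ)
    (hG : Integrable G μ) (h : ∀ x, f x - g x = F x - G x) :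
    ∫ x, f x ∂μ - ∫ x, g x ∂μ = ∫ x, F x ∂μ - ∫ x, G x ∂μ := by
  have h' : ∫ x, (f x + G x) ∂μ = ∫ x, (F x + g x) ∂μ :=
    integral_congr_ae (Filter.Eventually.of_forall fun x => show f x + G x = F x + g x by linarith [h x])
  rw [integral_add hf hG, integral_add hF hg] at h'
  linarith

/-- **Equivalence of the empirical Flow Matching and empirical conditional Flow Matching
objectives.** For fixed points `x_1,…,x_n`, strictly positive conditional probability paths
`p_t(·|x_i)` and conditional vector fields `v_t(·|x_i)`, for every measurable `v̂` for which
all the integrals are finite, the difference of the two objectives equals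
`∫_0^1 [∫ |v^n_t(x)|² p^n_t(x) dx − (1/n)∑_i ∫ |v_t(x|x_i)|² p_t(x|x_i) dx] dt`,
which does not depend on `v̂`. In particular, over any class of vector fields, the sets of
minimizers of the two objectives coincide. -/
theorem empirical_conditional_flow_matching_equivalence (d n : ℕ) (hn : 1 ≤ n)
    (X : Fin n → EuclideanSpace ℝ (Fin d))
    (p : ℝ → EuclideanSpace ℝ (Fin d) → EuclideanSpace ℝ (Fin d) → ℝ)
    (v : ℝ → EuclideanSpace ℝ (Fin d) → EuclideanSpace ℝ (Fin d) → EuclideanSpace ℝ (Fin d))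
    (hppos : ∀ t ∈ Set.Icc (0:ℝ) 1, ∀ x, ∀ i, 0 < p t x (X i))
    (hpdens : ∀ t ∈ Set.Icc (0:ℝ) 1, ∀ i, ∫ x, p t x (X i) = 1) :
    (∀ vhat : ℝ → EuclideanSpace ℝ (Fin d) → EuclideanSpace ℝ (Fin d),
      Admissible p v X vhat →
      FMobj p v X vhat - CFMobj p v X vhat
        = ∫ t in (0:ℝ)..1,
            ((∫ x, ‖empField p v X t x‖ ^ 2 * empPath p X t x)
              - (n : ℝ)⁻¹ * ∑ i, ∫ x, ‖v t x (X i)‖ ^ 2 * p t x (X i)))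
    ∧
    (∀ 𝒩 : Set (ℝ → EuclideanSpace ℝ (Fin d) → EuclideanSpace ℝ (Fin d)),
      (∀ u ∈ 𝒩, Admissible p v X u) →
      {u | u ∈ 𝒩 ∧ ∀ u' ∈ 𝒩, FMobj p v X u ≤ FMobj p v X u'}
        = {u | u ∈ 𝒩 ∧ ∀ u' ∈ 𝒩, CFMobj p v X u ≤ CFMobj p v X u'}) := by
  have key : ∀ vhat : ℝ → EuclideanSpace ℝ (Fin d) → EuclideanSpace ℝ (Fin d),
      Admissible p v X vhat →
      FMobj p v X vhat - CFMobj p v X vhat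
        = ∫ t in (0:ℝ)..1,
            ((∫ x, ‖empField p v X t x‖ ^ 2 * empPath p X t x)
              - (n : ℝ)⁻¹ * ∑ i, ∫ x, ‖v t x (X i)‖ ^ 2 * p t x (X i)) := by
    intro u hu
    obtain ⟨hmeas, hI1, hI2, hI3, hI4, hJ1, hJ2, hJ3, hJ4⟩ := hu
    haveI hne : Nonempty (Fin n) := ⟨⟨0, hn⟩⟩
    have hper : ∀ t ∈ Set.Icc (0:ℝ) 1,
        (∫ x, ‖u t x - empField p v X t x‖ ^ 2 * empPath p X t x)
          - (n : ℝ)⁻¹ * ∑ i, ∫ x, ‖u t x - v t x (X i)‖ ^ 2 * p t x (X i)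
        = (∫ x, ‖empField p v X t x‖ ^ 2 * empPath p X t x)
          - (n : ℝ)⁻¹ * ∑ i, ∫ x, ‖v t x (X i)‖ ^ 2 * p t x (X i) := by
      intro t ht
      have hg : Integrable
          (fun x => (n:ℝ)⁻¹ * ∑ i, ‖u t x - v t x (X i)‖ ^ 2 * p t x (X i)) :=
        (integrable_finset_sum _ fun i _ => hI2 t ht i).const_mul _
      have hG : Integrable
          (fun x => (n:ℝ)⁻¹ * ∑ i, ‖v t x (X i)‖ ^ 2 * p t x (X i)) :=
        (integrable_finset_sum _ fun i _ => hI4 t ht i).const_mul _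
      have eg : ∫ x, (n:ℝ)⁻¹ * ∑ i, ‖u t x - v t x (X i)‖ ^ 2 * p t x (X i)
          = (n:ℝ)⁻¹ * ∑ i, ∫ x, ‖u t x - v t x (X i)‖ ^ 2 * p t x (X i) := by
        rw [MeasureTheory.integral_const_mul, integral_finset_sum _ fun i _ => hI2 t ht i]
      have eG : ∫ x, (n:ℝ)⁻¹ * ∑ i, ‖v t x (X i)‖ ^ 2 * p t x (X i)
          = (n:ℝ)⁻¹ * ∑ i, ∫ x, ‖v t x (X i)‖ ^ 2 * p t x (X i) := by
        rw [MeasureTheory.integral_const_mul, integral_finset_sum _ fun i _ => hI4 t ht i]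
      rw [← eg, ← eG]
      refine integral_sub_eq_of_eq (hI1 t ht) hg (hI3 t ht) hG fun x => ?_
      have := aux_pointwise (u t x) (fun i => v t x (X i)) (fun i => p t x (X i))
        (fun i => hppos t ht x i) (n:ℝ)⁻¹
      simpa [empField, empPath] using this
    unfold FMobj CFMobj
    rw [← intervalIntegral.integral_sub hJ1 hJ2]
    refine intervalIntegral.integral_congr fun t ht => ?_
    rw [Set.uIcc_of_le (by norm_num : (0:ℝ) ≤ 1)] at ht
    exact hper t ht
  refine ⟨key, fun 𝒩 h𝒩 => ?_⟩
  ext u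
  simp only [Set.mem_setOf_eq]
  constructor
  · rintro ⟨hu, h⟩
    refine ⟨hu, fun u' hu' => ?_⟩
    have e1 := key u (h𝒩 u hu)
    have e2 := key u' (h𝒩 u' hu')
    have := h u' hu'
    linarith
  · rintro ⟨hu, h⟩
    refine ⟨hu, fun u' hu' => ?_⟩
    have e1 := key u (h𝒩 u hu)
    have e2 := key u' (h𝒩 u' hu')
    have := h u' hu'
    linarith

end
end

section
/- Let d = 1, let Z ∼ N(0,1), let ε > 0 and define the vector fields v^{(1)}_t(x) = 0 and v^{(2)}_t(x) = ε sin(x/ε) for all t ∈ [0,1], x ∈ ℝ. Let ψ^{(1)} and ψ^{(2)} be the corresponding flows (solutions of (d/dt)ψ_t(x) = v_t(ψ_t(x)), ψ_0(x) = x). Then: (i) ‖v^{(1)} − v^{(2)}‖_∞ ≤ ε, so it tends to 0 as ε → 0; (ii) the Wasserstein-1 distance between the laws of ψ^{(1)}_1(Z) and ψ^{(2)}_1(Z) is at most ε; (iii) there exists a constant c > 0 such that liminf_{ε→0} TV(law(ψ^{(1)}_1(Z)), law(ψ^{(2)}_1(Z))) ≥ c, where TV(P,Q) = sup_{A Borel}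 |P(A) − Q(A)| is the total variation distance. -/
open MeasureTheory ProbabilityTheory

noncomputable section

/-- Wasserstein-1 distance between measures on `ℝ` (dual formulation):
`W₁(P,Q) = sup { ∫ f dP − ∫ f dQ : f 1-Lipschitz }`. -/
def W1 (P Q : Measure ℝ) : ℝ :=
  ⨆ f : {f : ℝ → ℝ // LipschitzWith 1 f}, (∫ x, f.1 x ∂P - ∫ x, f.1 x ∂Q)

/-- Total variation distance `TV(P,Q) = sup_{A Borel} |P(A) − Q(A)|`. -/
def TV (P Q : Measure ℝ) : ℝ :=
  ⨆ A : {A : Set ℝ // MeasurableSet A}, |(P A.1).toReal - (Q A.1).toReal|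

open Real Set
open scoped NNReal ENNReal

lemma cos_one_le_num : Real.cos 1 ≤ 0.553 := by
  have h := Real.cos_bound (x := 1) (by norm_num)
  rw [abs_one] at h
  have h3 := (abs_le.mp h).2
  norm_num at h3 ⊢
  linarith

lemma ode_lemma {ε : ℝ} (hε : 0 < ε) {ψ : ℝ → ℝ}
    (hd : ∀ t ∈ Set.Icc (0:ℝ) 1, HasDerivAt ψ (ε * Real.sin (ψ t / ε)) t)
    {k : ℤ} (h0l : ε * (2*π*k + 1) ≤ ψ 0) (h0r : ψ 0 ≤ ε * (2*π*k + (2*π - 1))) :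
    ε * (2*π*k + π/2) ≤ ψ 1 ∧ ψ 1 ≤ ε * (2*π*k + 3*π/2) := by
  have hπ := Real.pi_gt_three
  set u : ℝ → ℝ := fun t => ψ t / ε with hu_def
  have hu : ∀ t ∈ Set.Icc (0:ℝ) 1, HasDerivAt u (Real.sin (u t)) t := by
    intro t ht
    have := (hd t ht).div_const ε
    have h2 : ε * Real.sin (ψ t / ε) / ε = Real.sin (u t) := by
      field_simp [hu_def]
      rfl
    rwa [h2] at this
  have hu0l : 2*π*k + 1 ≤ u 0 := by
    rw [hu_def]; rw [le_div_iff₀ hε]; linarith [h0l]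
  have hu0r : u 0 ≤ 2*π*k + (2*π - 1) := by
    rw [hu_def]; rw [div_le_iff₀ hε]; linarith [h0r]
  -- |u 1 - u 0| ≤ 1
  have hbd : |u 1 - u 0| ≤ 1 := by
    have := Convex.norm_image_sub_le_of_norm_hasDerivWithin_le
      (f := u) (f' := fun t => Real.sin (u t)) (s := Set.Icc (0:ℝ) 1) (C := 1)
      (fun t ht => (hu t ht).hasDerivWithinAt)
      (fun t _ => by rw [Real.norm_eq_abs]; exact abs_le.mpr ⟨Real.neg_one_le_sin _, Real.sin_le_one _⟩)
      (convex_Icc 0 1) (Set.left_mem_Icc.mpr zero_le_one) (Set.right_mem_Icc.mpr zero_le_one)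
    simpa using this
  -- g = cos ∘ u is antitone on [0,1]
  set g : ℝ → ℝ := fun t => Real.cos (u t) with hg_def
  have hg : ∀ t ∈ Set.Icc (0:ℝ) 1, HasDerivAt g (-Real.sin (u t) * Real.sin (u t)) t :=
    fun t ht => (hu t ht).cos
  have hgc : ContinuousOn g (Set.Icc 0 1) :=
    fun t ht => ((hg t ht).continuousAt).continuousWithinAt
  have hganti : AntitoneOn g (Set.Icc 0 1) := by
    refine antitoneOn_of_deriv_nonpos (convex_Icc 0 1) hgc ?_ ?_
    · intro t ht
      rw [interior_Icc] at ht
      exact ((hg t (Ioo_subset_Icc_self ht)).differentiableAt).differentiableWithinAt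
    · intro t ht
      rw [interior_Icc] at ht
      rw [(hg t (Ioo_subset_Icc_self ht)).deriv]
      nlinarith [sq_nonneg (Real.sin (u t))]
  -- g 0 ≤ cos 1
  have hg0 : g 0 ≤ Real.cos 1 := by
    have hw : Real.cos (u 0) = Real.cos (u 0 - 2*π*k) := by
      conv_lhs => rw [show u 0 = (u 0 - 2*π*k) + (k : ℝ) * (2*π) by ring]
      rw [Real.cos_add_int_mul_two_pi]
    show Real.cos (u 0) ≤ _
    rw [hw]
    set w := u 0 - 2*π*k with hw_def
    have hw1 : 1 ≤ w := by simp [hw_def]; linarith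
    have hw2 : w ≤ 2*π - 1 := by simp [hw_def]; linarith
    rcases le_or_gt w π with hcase | hcase
    · exact Real.cos_le_cos_of_nonneg_of_le_pi zero_le_one hcase hw1
    · have : Real.cos w = Real.cos (2*π - w) := (Real.cos_two_pi_sub w).symm
      rw [this]
      refine Real.cos_le_cos_of_nonneg_of_le_pi zero_le_one (by linarith) (by linarith)
  -- key: cos (u 1) ≤ 0
  have key : g 1 ≤ 0 := by
    by_cases hpos : ∀ t ∈ Set.Icc (0:ℝ) 1, 0 ≤ g t
    · exfalso
      set m : ℝ := 1 - Real.cos 1 ^ 2 with hm_def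
      set φ : ℝ → ℝ := fun t => g t + m * t with hφ_def
      have hφ : ∀ t ∈ Set.Icc (0:ℝ) 1, HasDerivAt φ (-Real.sin (u t) * Real.sin (u t) + m) t :=
        fun t ht => ((hg t ht).add ((hasDerivAt_id t).const_mul m)).congr_deriv (by ring)
      have hφanti : AntitoneOn φ (Set.Icc 0 1) := by
        refine antitoneOn_of_deriv_nonpos (convex_Icc 0 1)
          (fun t ht => ((hφ t ht).continuousAt).continuousWithinAt) ?_ ?_
        · intro t ht
          rw [interior_Icc] at ht
          exact ((hφ t (Ioo_subset_Icc_self ht)).differentiableAt).differentiableWithinAt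
        · intro t ht
          rw [interior_Icc] at ht
          have ht' := Ioo_subset_Icc_self ht
          rw [(hφ t ht').deriv]
          have h1 : 0 ≤ g t := hpos t ht'
          have h2 : g t ≤ g 0 := hganti (Set.left_mem_Icc.mpr zero_le_one) ht' ht.1.le
          have h3 := Real.sin_sq_add_cos_sq (u t)
          have h4 : Real.cos (u t) = g t := rfl
          have hc1 : (0:ℝ) < Real.cos 1 := Real.cos_pos_of_mem_Ioo
            ⟨by linarith [Real.pi_gt_three], by linarith [Real.pi_gt_three]⟩
          nlinarith [cos_one_le_num]
      have h10 := hφanti (Set.left_mem_Icc.mpr zero_le_one) (Set.right_mem_Icc.mpr zero_le_one) zero_le_one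
      have hg1 : 0 ≤ g 1 := hpos 1 (Set.right_mem_Icc.mpr zero_le_one)
      have hc1 := cos_one_le_num
      simp only [hφ_def, mul_one, mul_zero, add_zero] at h10
      nlinarith [Real.cos_one_pos, cos_one_le_num, hg0, hg1, h10]
    · push_neg at hpos
      obtain ⟨t, ht, hgt⟩ := hpos
      have := hganti ht (Set.right_mem_Icc.mpr zero_le_one) ht.2
      linarith
  -- conclude
  have hrange1 : u 0 - 1 ≤ u 1 := by have := (abs_le.mp hbd).1; linarith
  have hrange2 : u 1 ≤ u 0 + 1 := by have := (abs_le.mp hbd).2; linarith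
  set w1 := u 1 - 2*π*k with hw1_def
  have hcw1 : Real.cos w1 ≤ 0 := by
    have : Real.cos (u 1) = Real.cos w1 := by
      conv_lhs => rw [show u 1 = w1 + (k:ℝ) * (2*π) by ring]
      rw [Real.cos_add_int_mul_two_pi]
    rw [← this]; exact key
  have hw1l : 0 ≤ w1 := by simp [hw1_def]; linarith
  have hw1r : w1 ≤ 2*π := by simp [hw1_def]; linarith
  have hhalfpi : π/2 ≤ w1 := by
    by_contra h
    push_neg at h
    have : 0 < Real.cos w1 := Real.cos_pos_of_mem_Ioo ⟨by linarith, h⟩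
    linarith
  have h3halfpi : w1 ≤ 3*π/2 := by
    by_contra h
    push_neg at h
    have he : Real.cos w1 = Real.cos (w1 - 2*π) := by
      conv_lhs => rw [show w1 = (w1 - 2*π) + ((1:ℤ):ℝ) * (2*π) by push_cast; ring]
      rw [Real.cos_add_int_mul_two_pi]
    have : 0 < Real.cos (w1 - 2*π) := Real.cos_pos_of_mem_Ioo ⟨by linarith, by linarith⟩
    rw [he] at hcw1
    linarith
  have hfin1 : 2*π*k + π/2 ≤ u 1 := by simp only [hw1_def] at hhalfpi; linarith
  have hfin2 : u 1 ≤ 2*π*k + 3*π/2 := by simp only [hw1_def] at h3halfpi; linarith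
  have hq1 : 2*π*k + π/2 ≤ ψ 1 / ε := hfin1
  have hq2 : ψ 1 / ε ≤ 2*π*k + 3*π/2 := hfin2
  rw [le_div_iff₀ hε] at hq1
  rw [div_le_iff₀ hε] at hq2
  constructor <;> linarith


lemma gf_dec {x y : ℝ} (hx : 0 ≤ x) (hxy : x ≤ y) :
    gaussianPDFReal 0 1 y ≤ gaussianPDFReal 0 1 x := by
  unfold gaussianPDFReal
  have h4 : (0:ℝ) ≤ (Real.sqrt (2*π*((1:ℝ≥0):ℝ)))⁻¹ := by positivity
  apply mul_le_mul_of_nonneg_left _ h4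
  apply Real.exp_le_exp.mpr
  simp only [NNReal.coe_one, mul_one, sub_zero]
  nlinarith

lemma gf_nonneg (x : ℝ) : 0 ≤ gaussianPDFReal 0 1 x := gaussianPDFReal_nonneg 0 1 x

lemma gf_zero_le : gaussianPDFReal 0 1 0 ≤ 0.4 := by
  unfold gaussianPDFReal
  have h1 : ((1:ℝ≥0):ℝ) = 1 := rfl
  rw [h1]
  have h2 : Real.sqrt (2*π*1) ≥ 5/2 := by
    rw [show (5/2:ℝ) = Real.sqrt ((5/2)^2) by rw [Real.sqrt_sq]; norm_num]
    apply Real.sqrt_le_sqrt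
    nlinarith [Real.pi_gt_d6]
  have h3 : rexp (-(0-0)^2/(2*1)) = 1 := by norm_num
  rw [h3, mul_one]
  have h4 : (0:ℝ) < Real.sqrt (2*π*1) := by positivity
  rw [inv_le_comm₀ h4 (by norm_num)]
  linarith

-- interval bounds
lemma meas_Icc_le {c a b : ℝ} (hc : 0 ≤ c) (hca : c ≤ a) (hab : a ≤ b) :
    gaussianReal 0 1 (Icc a b) ≤ ENNReal.ofReal ((b - a) * gaussianPDFReal 0 1 c) := by
  rw [gaussianReal_apply 0 one_ne_zero]
  calc ∫⁻ x in Icc a b, gaussianPDF 0 1 x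
      ≤ ∫⁻ _x in Icc a b, ENNReal.ofReal (gaussianPDFReal 0 1 c) := by
        refine setLIntegral_mono measurable_const (fun x hx => ?_)
        exact ENNReal.ofReal_le_ofReal (gf_dec hc (le_trans hca hx.1))
    _ = ENNReal.ofReal (gaussianPDFReal 0 1 c) * volume (Icc a b) := setLIntegral_const _ _
    _ = ENNReal.ofReal ((b - a) * gaussianPDFReal 0 1 c) := by
        rw [Real.volume_Icc, ← ENNReal.ofReal_mul (gf_nonneg c)]
        ring_nf

lemma meas_Ioc_le {a b : ℝ} (ha : 0 ≤ a) (hab : a ≤ b) :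
    gaussianReal 0 1 (Ioc a b) ≤ ENNReal.ofReal ((b - a) * gaussianPDFReal 0 1 a) := by
  rw [gaussianReal_apply 0 one_ne_zero]
  calc ∫⁻ x in Ioc a b, gaussianPDF 0 1 x
      ≤ ∫⁻ _x in Ioc a b, ENNReal.ofReal (gaussianPDFReal 0 1 a) := by
        refine setLIntegral_mono measurable_const (fun x hx => ?_)
        exact ENNReal.ofReal_le_ofReal (gf_dec ha hx.1.le)
    _ = ENNReal.ofReal (gaussianPDFReal 0 1 a) * volume (Ioc a b) := setLIntegral_const _ _
    _ = ENNReal.ofReal ((b - a) * gaussianPDFReal 0 1 a) := by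
        rw [Real.volume_Ioc, ← ENNReal.ofReal_mul (gf_nonneg a)]
        ring_nf

lemma le_meas_Ioc {a b : ℝ} (ha : 0 ≤ a) (hab : a ≤ b) :
    ENNReal.ofReal ((b - a) * gaussianPDFReal 0 1 b) ≤ gaussianReal 0 1 (Ioc a b) := by
  rw [gaussianReal_apply 0 one_ne_zero]
  calc ENNReal.ofReal ((b - a) * gaussianPDFReal 0 1 b)
      = ENNReal.ofReal (gaussianPDFReal 0 1 b) * volume (Ioc a b) := by
        rw [Real.volume_Ioc, ← ENNReal.ofReal_mul (gf_nonneg b)]; ring_nf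
    _ = ∫⁻ _x in Ioc a b, ENNReal.ofReal (gaussianPDFReal 0 1 b) := (setLIntegral_const _ _).symm
    _ ≤ ∫⁻ x in Ioc a b, gaussianPDF 0 1 x := by
        refine setLIntegral_mono (measurable_gaussianPDF 0 1) (fun x hx => ?_)
        exact ENNReal.ofReal_le_ofReal (gf_dec (le_trans ha hx.1.le) hx.2)

lemma gauss_neg_inv : (gaussianReal 0 1).map (fun x => -x) = gaussianReal 0 1 := by
  have := gaussianReal_map_const_mul (μ := 0) (v := 1) (-1)
  simp only [neg_one_mul] at this
  rw [this]
  norm_num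

lemma gauss_neg_apply {S : Set ℝ} (hS : MeasurableSet S) :
    gaussianReal 0 1 ((fun x => -x) ⁻¹' S) = gaussianReal 0 1 S := by
  rw [← gauss_neg_inv, Measure.map_apply measurable_neg hS, gauss_neg_inv]

lemma gauss_singleton : gaussianReal 0 1 {(0:ℝ)} = 0 := by
  rw [gaussianReal_apply 0 one_ne_zero]
  rw [setLIntegral_measure_zero _ _ (measure_singleton 0)]

lemma gauss_Ioi_zero : gaussianReal 0 1 (Ioi (0:ℝ)) = 1/2 := by
  have hneg : gaussianReal 0 1 (Iio (0:ℝ)) = gaussianReal 0 1 (Ioi 0) := by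
    have h : (fun x : ℝ => -x) ⁻¹' (Ioi 0) = Iio 0 := by ext x; simp
    rw [← h, gauss_neg_apply measurableSet_Ioi]
  have hIci : gaussianReal 0 1 (Ici (0:ℝ)) = gaussianReal 0 1 (Ioi 0) := by
    have h : Ici (0:ℝ) = {0} ∪ Ioi 0 := by
      ext x; simp [le_iff_lt_or_eq, eq_comm, or_comm]
    rw [h, measure_union (by simp [Set.disjoint_left]) measurableSet_Ioi, gauss_singleton, zero_add]
  have hcompl : gaussianReal 0 1 (Iio (0:ℝ)) + gaussianReal 0 1 (Ici 0) = 1 := by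
    rw [show Ici (0:ℝ) = (Iio 0)ᶜ by simp, measure_add_measure_compl measurableSet_Iio,
      measure_univ]
  rw [hneg, hIci, ← two_mul] at hcompl
  rw [ENNReal.eq_div_iff (by norm_num) (by norm_num), hcompl]

noncomputable def Aset (ε : ℝ) : Set ℝ := ⋃ k : ℤ, Icc (ε*(2*π*k + π/2)) (ε*(2*π*k + 3*π/2))
noncomputable def Bplus (ε : ℝ) : Set ℝ := ⋃ k : ℕ, Icc (ε*(2*π*k + 1)) (ε*(2*π*k + (2*π-1)))

lemma Aset_measurable (ε : ℝ) : MeasurableSet (Aset ε) :=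
  MeasurableSet.iUnion (fun _ => measurableSet_Icc)

lemma Bplus_measurable (ε : ℝ) : MeasurableSet (Bplus ε) :=
  MeasurableSet.iUnion (fun _ => measurableSet_Icc)

lemma Aset_symm (ε : ℝ) : (fun x : ℝ => -x) ⁻¹' (Aset ε) = Aset ε := by
  have hmain : ∀ x : ℝ, x ∈ Aset ε → -x ∈ Aset ε := by
    intro x hx
    rw [Aset, mem_iUnion] at hx ⊢
    obtain ⟨k, hk1, hk2⟩ := hx
    refine ⟨-1-k, ?_, ?_⟩ <;> push_cast <;> [nlinarith; nlinarith]
  ext x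
  simp only [mem_preimage]
  constructor
  · intro h; have := hmain _ h; rwa [neg_neg] at this
  · exact fun h => hmain _ h

-- key sum bound
lemma sum_Ioc_le_half (t : ℕ → ℝ) (ht0 : t 0 = 0) (hmono : StrictMono t) :
    (∑' k : ℕ, gaussianReal 0 1 (Ioc (t k) (t (k+1)))) ≤ 1/2 := by
  have hdisj : Pairwise (Function.onFun Disjoint (fun k : ℕ => Ioc (t k) (t (k+1)))) := by
    intro k l hkl
    rcases lt_or_gt_of_ne hkl with h | h
    · refine Set.Ioc_disjoint_Ioc.mpr ?_
      refine le_trans (min_le_left _ _) (le_trans ?_ (le_max_right _ _))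
      exact hmono.monotone h
    · refine Set.Ioc_disjoint_Ioc.mpr ?_
      refine le_trans (min_le_right _ _) (le_trans ?_ (le_max_left _ _))
      exact hmono.monotone h
  rw [← measure_iUnion hdisj (fun k => measurableSet_Ioc)]
  rw [← gauss_Ioi_zero]
  refine measure_mono ?_
  refine iUnion_subset (fun k => ?_)
  intro x hx
  have : t 0 ≤ t k := hmono.monotone (Nat.zero_le k)
  exact lt_of_le_of_lt (by linarith [ht0]) hx.1

lemma Aset_upper {ε : ℝ} (hε : 0 < ε) (hε' : ε ≤ 1/1000) :
    gaussianReal 0 1 (Aset ε) ≤ ENNReal.ofReal 0.51 := by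
  have hπ3 := Real.pi_gt_three
  have hπ4 := Real.pi_lt_d2
  set t : ℕ → ℝ := fun k => ε * (2*π*k) with ht_def
  have ht0 : t 0 = 0 := by simp [ht_def]
  have htmono : StrictMono t := by
    intro m n hmn
    simp only [ht_def]
    have h1 : (m:ℝ) < n := by exact_mod_cast hmn
    have hp : (0:ℝ) < 2*π := by linarith
    exact mul_lt_mul_of_pos_left (mul_lt_mul_of_pos_left h1 hp) hε
  -- pieces over nonnegative k
  have hcell : ∀ k : ℕ, gaussianReal 0 1 (Icc (ε*(2*π*k + π/2)) (ε*(2*π*k + 3*π/2)))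
      ≤ ENNReal.ofReal (ε*π * gaussianPDFReal 0 1 (t k)) := by
    intro k
    refine le_trans (meas_Icc_le (c := t k) (by positivity) (by simp only [ht_def]; nlinarith)
      (by nlinarith)) ?_
    refine ENNReal.ofReal_le_ofReal (le_of_eq ?_)
    ring_nf
  -- positive part of A is inside the union over ℕ
  have hpos_sub : Aset ε ∩ Ici 0 ⊆ ⋃ k : ℕ, Icc (ε*(2*π*k + π/2)) (ε*(2*π*k + 3*π/2)) := by
    rintro x ⟨hxA, hx0⟩
    rw [Aset, mem_iUnion] at hxA
    obtain ⟨k, hk1, hk2⟩ := hxA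
    have hk0 : 0 ≤ k := by
      by_contra h
      push_neg at h
      have hk1' : (k:ℝ) ≤ -1 := by exact_mod_cast (show k ≤ -1 by omega)
      have hle : x ≤ ε * (2*π*(-1:ℝ) + 3*π/2) := le_trans hk2 (by nlinarith)
      have hx0' : (0:ℝ) ≤ x := hx0
      nlinarith
    rw [mem_iUnion]
    have hcast : ((k.toNat : ℕ) : ℝ) = (k : ℝ) := by
      have h := Int.toNat_of_nonneg hk0
      exact_mod_cast congrArg (fun z : ℤ => (z : ℝ)) h
    refine ⟨k.toNat, ?_, ?_⟩ <;> · rw [hcast]; assumption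
  -- the ℕ-sum bound
  have hsumA : gaussianReal 0 1 (Aset ε ∩ Ici 0)
      ≤ ∑' k : ℕ, ENNReal.ofReal (ε*π * gaussianPDFReal 0 1 (t k)) := by
    refine le_trans (measure_mono hpos_sub) (le_trans (measure_iUnion_le _) ?_)
    exact ENNReal.tsum_le_tsum hcell
  -- split and bound the shifted sum
  have hshift : (∑' k : ℕ, ENNReal.ofReal (ε*π * gaussianPDFReal 0 1 (t k)))
      = ENNReal.ofReal (ε*π * gaussianPDFReal 0 1 0)
        + ∑' k : ℕ, ENNReal.ofReal (ε*π * gaussianPDFReal 0 1 (t (k+1))) := by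
    rw [tsum_eq_zero_add' ENNReal.summable, ht0]
  have hS2 : (∑' k : ℕ, ENNReal.ofReal (ε*π * gaussianPDFReal 0 1 (t (k+1))))
      + (∑' k : ℕ, ENNReal.ofReal (ε*π * gaussianPDFReal 0 1 (t (k+1)))) ≤ 1/2 := by
    rw [← ENNReal.tsum_add]
    refine le_trans (ENNReal.tsum_le_tsum (fun k => ?_)) (sum_Ioc_le_half t ht0 htmono)
    rw [← ENNReal.ofReal_add (mul_nonneg (by positivity) (gf_nonneg _))
      (mul_nonneg (by positivity) (gf_nonneg _))]
    refine le_trans (ENNReal.ofReal_le_ofReal (le_of_eq ?_)) (le_meas_Ioc (by positivity)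
      (htmono (Nat.lt_succ_self k)).le)
    have : t (k+1) - t k = ε * (2*π) := by simp only [ht_def]; push_cast; ring
    rw [this]
    ring
  -- symmetric part
  have hAneg : gaussianReal 0 1 (Aset ε ∩ Iio 0) ≤ gaussianReal 0 1 (Aset ε ∩ Ici 0) := by
    have hpre : (fun x : ℝ => -x) ⁻¹' (Aset ε ∩ Ioi 0) = Aset ε ∩ Iio 0 := by
      rw [Set.preimage_inter, Aset_symm]
      congr 1
      ext x; simp
    rw [← hpre, gauss_neg_apply ((Aset_measurable ε).inter measurableSet_Ioi)]
    exact measure_mono (inter_subset_inter_right _ Ioi_subset_Ici_self)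
  -- assemble
  have htotal : gaussianReal 0 1 (Aset ε)
      ≤ gaussianReal 0 1 (Aset ε ∩ Ici 0) + gaussianReal 0 1 (Aset ε ∩ Iio 0) := by
    refine le_trans (measure_mono ?_) (measure_union_le _ _)
    intro x hx
    rcases le_or_gt 0 x with h | h
    · exact Or.inl ⟨hx, h⟩
    · exact Or.inr ⟨hx, h⟩
  have hgf0 : gaussianPDFReal 0 1 0 ≤ 0.4 := gf_zero_le
  calc gaussianReal 0 1 (Aset ε)
      ≤ gaussianReal 0 1 (Aset ε ∩ Ici 0) + gaussianReal 0 1 (Aset ε ∩ Iio 0) := htotal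
    _ ≤ gaussianReal 0 1 (Aset ε ∩ Ici 0) + gaussianReal 0 1 (Aset ε ∩ Ici 0) := by
        gcongr
    _ ≤ (ENNReal.ofReal (ε*π * gaussianPDFReal 0 1 0)
          + ∑' k : ℕ, ENNReal.ofReal (ε*π * gaussianPDFReal 0 1 (t (k+1))))
        + (ENNReal.ofReal (ε*π * gaussianPDFReal 0 1 0)
          + ∑' k : ℕ, ENNReal.ofReal (ε*π * gaussianPDFReal 0 1 (t (k+1)))) := by
        have hsumA2 := hsumA
        rw [hshift] at hsumA2
        exact add_le_add hsumA2 hsumA2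
    _ ≤ ENNReal.ofReal (ε*π * gaussianPDFReal 0 1 0) + ENNReal.ofReal (ε*π * gaussianPDFReal 0 1 0)
        + (1/2 : ℝ≥0∞) := by
        rw [add_add_add_comm]
        exact add_le_add le_rfl hS2
    _ ≤ ENNReal.ofReal 0.005 + (1/2 : ℝ≥0∞) := by
        gcongr
        rw [← ENNReal.ofReal_add (mul_nonneg (by positivity) (gf_nonneg _))
          (mul_nonneg (by positivity) (gf_nonneg _))]
        refine ENNReal.ofReal_le_ofReal ?_
        have h1 : (0:ℝ) ≤ gaussianPDFReal 0 1 0 := gf_nonneg 0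
        have h2 : ε*π ≤ 0.00315 := by nlinarith
        have h3 : (0:ℝ) ≤ ε*π := by positivity
        nlinarith
    _ ≤ ENNReal.ofReal 0.51 := by
        rw [show (1/2 : ℝ≥0∞) = ENNReal.ofReal (1/2) by
            rw [ENNReal.ofReal_div_of_pos (by norm_num), ENNReal.ofReal_one, ENNReal.ofReal_ofNat],
          ← ENNReal.ofReal_add (by norm_num) (by norm_num)]
        exact ENNReal.ofReal_le_ofReal (by norm_num)

lemma Ioi_cover {ε : ℝ} (hε : 0 < ε) :
    Ioi (ε * (2*π)) ⊆ ⋃ k : ℕ, Ioc (ε*(2*π*(k+1))) (ε*(2*π*(k+2))) := by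
  have hπ3 := Real.pi_gt_three
  intro x hx
  have h2πε : (0:ℝ) < ε * (2*π) := by positivity
  have hx' : ε * (2*π) < x := hx
  set q : ℝ := x / (ε * (2*π)) with hq_def
  have hq1 : 1 < q := by rw [hq_def, lt_div_iff₀ h2πε]; linarith
  set m : ℕ := ⌈q⌉₊ with hm_def
  have hm2 : 2 ≤ m := by
    have : 1 < m := Nat.lt_ceil.mpr (by exact_mod_cast hq1)
    omega
  have hqm : q ≤ m := Nat.le_ceil q
  have hmq : (m:ℝ) - 1 < q := by
    have := Nat.ceil_lt_add_one (le_of_lt (lt_trans zero_lt_one hq1))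
    rw [← hm_def] at this
    linarith
  rw [mem_iUnion]
  refine ⟨m - 2, ?_, ?_⟩
  · have hcast : ((m - 2 : ℕ) : ℝ) + 1 = (m:ℝ) - 1 := by
      have : ((m - 2 : ℕ) : ℝ) = (m:ℝ) - 2 := by
        push_cast [Nat.cast_sub hm2]; ring
      rw [this]; ring
    rw [hcast]
    calc ε * (2*π*((m:ℝ)-1)) = (ε * (2*π)) * ((m:ℝ)-1) := by ring
      _ < (ε * (2*π)) * q := by exact mul_lt_mul_of_pos_left hmq h2πε
      _ = x := by rw [hq_def]; field_simp
  · have hcast : ((m - 2 : ℕ) : ℝ) + 2 = (m:ℝ) := by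
      push_cast [Nat.cast_sub hm2]; ring
    rw [hcast]
    calc x = (ε * (2*π)) * q := by rw [hq_def]; field_simp
      _ ≤ (ε * (2*π)) * m := mul_le_mul_of_nonneg_left hqm h2πε.le
      _ = ε * (2*π*(m:ℝ)) := by ring

lemma Bplus_lower {ε : ℝ} (hε : 0 < ε) (hε' : ε ≤ 1/1000) :
    ENNReal.ofReal 0.67 ≤ gaussianReal 0 1 (Bplus ε ∪ (fun x : ℝ => -x) ⁻¹' (Bplus ε)) := by
  have hπ3 := Real.pi_gt_three
  have hπ4 := Real.pi_lt_d2
  set t : ℕ → ℝ := fun k => ε * (2*π*k) with ht_def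
  -- tail bound : 1/2 - ofReal (2πε · 0.4) ≤ γ(Ioi (ε·2π))
  have htail : (1/2 : ℝ≥0∞) - ENNReal.ofReal (ε*(2*π) * 0.4) ≤ gaussianReal 0 1 (Ioi (ε*(2*π))) := by
    rw [tsub_le_iff_right]
    have hsplit : gaussianReal 0 1 (Ioi (0:ℝ))
        = gaussianReal 0 1 (Ioc 0 (ε*(2*π))) + gaussianReal 0 1 (Ioi (ε*(2*π))) := by
      rw [← measure_union (Set.Ioc_disjoint_Ioi le_rfl) measurableSet_Ioi,
        Set.Ioc_union_Ioi_eq_Ioi (by positivity)]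
    rw [← gauss_Ioi_zero, hsplit]
    rw [add_comm]
    gcongr
    refine le_trans (meas_Ioc_le le_rfl (by positivity)) ?_
    refine ENNReal.ofReal_le_ofReal ?_
    have h1 := gf_zero_le
    have h2 := gf_nonneg 0
    nlinarith [mul_le_mul_of_nonneg_left h1 (by positivity : (0:ℝ) ≤ ε*(2*π))]
  -- γ(Ioi 2πε) ≤ Σ ofReal (2πε gf (t (k+1)))
  have hcover : gaussianReal 0 1 (Ioi (ε*(2*π)))
      ≤ ∑' k : ℕ, ENNReal.ofReal (ε*(2*π) * gaussianPDFReal 0 1 (t (k+1))) := by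
    refine le_trans (measure_mono (Ioi_cover hε)) (le_trans (measure_iUnion_le _) ?_)
    refine ENNReal.tsum_le_tsum (fun k => ?_)
    refine le_trans (meas_Ioc_le (by positivity) (by nlinarith [Nat.cast_nonneg (α := ℝ) k])) ?_
    refine ENNReal.ofReal_le_ofReal ?_
    have heq : ε*(2*π*((k:ℝ)+2)) - ε*(2*π*((k:ℝ)+1)) = ε*(2*π) := by ring
    rw [heq]
    have : t (k+1) = ε*(2*π*((k:ℝ)+1)) := by simp only [ht_def]; push_cast; ring
    rw [this]
  -- per-cell lower bound
  have hcell : ∀ k : ℕ, ENNReal.ofReal ((2*π-2)*ε * gaussianPDFReal 0 1 (t (k+1)))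
      ≤ gaussianReal 0 1 (Icc (ε*(2*π*k + 1)) (ε*(2*π*k + (2*π-1)))) := by
    intro k
    have hk0 : (0:ℝ) ≤ (k:ℝ) := Nat.cast_nonneg k
    refine le_trans ?_ (measure_mono Set.Ioc_subset_Icc_self)
    refine le_trans ?_ (le_meas_Ioc (a := ε*(2*π*k + 1))
      (mul_nonneg hε.le (by nlinarith)) (by nlinarith [mul_pos hε (show (0:ℝ) < 2*π - 2 by linarith)]))
    refine ENNReal.ofReal_le_ofReal ?_
    have heq : ε*(2*π*(k:ℝ) + (2*π-1)) - ε*(2*π*(k:ℝ) + 1) = (2*π-2)*ε := by ring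
    rw [heq]
    have hmono : gaussianPDFReal 0 1 (t (k+1)) ≤ gaussianPDFReal 0 1 (ε*(2*π*(k:ℝ) + (2*π-1))) := by
      refine gf_dec (mul_nonneg hε.le (by nlinarith [Nat.cast_nonneg (α := ℝ) k])) ?_
      simp only [ht_def]; push_cast; nlinarith
    exact mul_le_mul_of_nonneg_left hmono (mul_nonneg (show (0:ℝ) ≤ 2*π-2 by linarith) hε.le)
  -- sum over cells
  have hBdisj : Pairwise (Function.onFun Disjoint
      (fun k : ℕ => Icc (ε*(2*π*k + 1)) (ε*(2*π*k + (2*π-1))))) := by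
    intro k l hkl
    have key : ∀ m n : ℕ, m < n → Disjoint (Icc (ε*(2*π*m + 1)) (ε*(2*π*m + (2*π-1))))
        (Icc (ε*(2*π*n + 1)) (ε*(2*π*n + (2*π-1)))) := by
      intro m n hmn
      have h1 : (m:ℝ) + 1 ≤ n := by exact_mod_cast hmn
      refine Set.disjoint_left.mpr (fun x hx1 hx2 => ?_)
      have h2 := hx1.2
      have h3 := hx2.1
      nlinarith [mul_pos hε (show (0:ℝ) < 2*π*((n:ℝ)-(m:ℝ)-1)+2 by nlinarith)]
    rcases lt_or_gt_of_ne hkl with h | h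
    · exact key k l h
    · exact (key l k h).symm
  have hBsum : (∑' k : ℕ, ENNReal.ofReal ((2*π-2)*ε * gaussianPDFReal 0 1 (t (k+1))))
      ≤ gaussianReal 0 1 (Bplus ε) := by
    rw [show Bplus ε = ⋃ k : ℕ, Icc (ε*(2*π*k + 1)) (ε*(2*π*k + (2*π-1))) from rfl,
      measure_iUnion hBdisj (fun k => measurableSet_Icc)]
    exact ENNReal.tsum_le_tsum hcell
  -- ratio step
  have hratio : ENNReal.ofReal ((π-1)/π) * (∑' k : ℕ, ENNReal.ofReal (ε*(2*π) * gaussianPDFReal 0 1 (t (k+1))))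
      = ∑' k : ℕ, ENNReal.ofReal ((2*π-2)*ε * gaussianPDFReal 0 1 (t (k+1))) := by
    rw [← ENNReal.tsum_mul_left]
    congr 1
    ext k
    rw [← ENNReal.ofReal_mul (div_nonneg (by linarith) (by linarith))]
    congr 1
    field_simp
  -- neg part
  have hnegB : gaussianReal 0 1 ((fun x : ℝ => -x) ⁻¹' (Bplus ε)) = gaussianReal 0 1 (Bplus ε) :=
    gauss_neg_apply (Bplus_measurable ε)
  have hdisjBn : Disjoint (Bplus ε) ((fun x : ℝ => -x) ⁻¹' (Bplus ε)) := by
    have hBpos : Bplus ε ⊆ Ioi 0 := by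
      refine iUnion_subset (fun k => ?_)
      intro x hx
      have hk0 : (0:ℝ) ≤ (k:ℝ) := Nat.cast_nonneg k
      have h5 := hx.1
      simp only [mem_Ioi]
      nlinarith [mul_pos hε (show (0:ℝ) < 2*π*(k:ℝ)+1 by nlinarith)]
    refine Set.disjoint_left.mpr (fun x hx1 hx2 => ?_)
    have h1 : 0 < x := hBpos hx1
    have h2 : 0 < -x := hBpos hx2
    linarith
  have hunion : gaussianReal 0 1 (Bplus ε ∪ (fun x : ℝ => -x) ⁻¹' (Bplus ε))
      = gaussianReal 0 1 (Bplus ε) + gaussianReal 0 1 (Bplus ε) := by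
    rw [measure_union hdisjBn (measurable_neg (Bplus_measurable ε))]
    rw [hnegB]
  have hhalf : (1/2 : ℝ≥0∞) = ENNReal.ofReal (1/2) := by
    rw [ENNReal.ofReal_div_of_pos (by norm_num), ENNReal.ofReal_one, ENNReal.ofReal_ofNat]
  have hπ5 := Real.pi_gt_d6
  have hchain : ENNReal.ofReal 0.335 ≤ gaussianReal 0 1 (Bplus ε) := by
    calc ENNReal.ofReal 0.335
        ≤ ENNReal.ofReal ((π-1)/π) * ENNReal.ofReal (1/2 - ε*(2*π)*0.4) := by
          rw [← ENNReal.ofReal_mul (div_nonneg (by linarith) (by linarith))]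
          refine ENNReal.ofReal_le_ofReal ?_
          have h68 : (0.68:ℝ) ≤ (π-1)/π := by
            rw [le_div_iff₀ (by linarith)]
            nlinarith
          have hz : ε*(2*π)*0.4 ≤ 0.00252 := by nlinarith
          nlinarith [mul_le_mul_of_nonneg_right h68
            (show (0:ℝ) ≤ 1/2 - ε*(2*π)*0.4 by nlinarith)]
      _ ≤ ENNReal.ofReal ((π-1)/π) * ((1/2 : ℝ≥0∞) - ENNReal.ofReal (ε*(2*π)*0.4)) := by
          refine mul_le_mul_right ?_ _
          rw [hhalf, ← ENNReal.ofReal_sub _ (by positivity)]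
      _ ≤ ENNReal.ofReal ((π-1)/π) * gaussianReal 0 1 (Ioi (ε*(2*π))) := by gcongr
      _ ≤ ENNReal.ofReal ((π-1)/π)
          * (∑' k : ℕ, ENNReal.ofReal (ε*(2*π) * gaussianPDFReal 0 1 (t (k+1)))) := by gcongr
      _ = ∑' k : ℕ, ENNReal.ofReal ((2*π-2)*ε * gaussianPDFReal 0 1 (t (k+1))) := hratio
      _ ≤ gaussianReal 0 1 (Bplus ε) := hBsum
  rw [hunion]
  calc ENNReal.ofReal 0.67 ≤ ENNReal.ofReal 0.335 + ENNReal.ofReal 0.335 := by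
        rw [← ENNReal.ofReal_add (by norm_num) (by norm_num)]
        norm_num
    _ ≤ _ := add_le_add hchain hchain

lemma Bfull_cells {ε : ℝ} (hε : 0 < ε) {x : ℝ}
    (hx : x ∈ Bplus ε ∪ (fun y : ℝ => -y) ⁻¹' (Bplus ε)) :
    ∃ k : ℤ, ε*(2*π*k + 1) ≤ x ∧ x ≤ ε*(2*π*k + (2*π-1)) := by
  rcases hx with hx | hx
  · rw [Bplus, mem_iUnion] at hx
    obtain ⟨k, h1, h2⟩ := hx
    exact ⟨(k:ℤ), by push_cast; exact_mod_cast h1, by push_cast; exact_mod_cast h2⟩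
  · rw [mem_preimage, Bplus, mem_iUnion] at hx
    obtain ⟨k, h1, h2⟩ := hx
    refine ⟨-1 - (k:ℤ), ?_, ?_⟩ <;> push_cast <;> nlinarith [h1, h2]

lemma map_gauss_le_one (g : ℝ → ℝ) (A : Set ℝ) :
    (Measure.map g (gaussianReal 0 1)) A ≤ 1 := by
  by_cases h : AEMeasurable g (gaussianReal 0 1)
  · have : IsProbabilityMeasure (Measure.map g (gaussianReal 0 1)) := Measure.isProbabilityMeasure_map h
    exact prob_le_one
  · rw [Measure.map_of_not_aemeasurable h]
    simp

/-- **Total variation is unsuitable for evaluating Flow Matching.**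
Let `d = 1`, `Z ∼ N(0,1)`, `ε > 0`, and consider the vector fields `v^{(1)}_t(x) = 0` and
`v^{(2)}_t(x) = ε sin(x/ε)` with respective flows `ψ^{(1)}` and `ψ^{(2)}` (solutions of
`(d/dt)ψ_t(x) = v_t(ψ_t(x))`, `ψ_0(x) = x`). Then `‖v^{(1)} − v^{(2)}‖_∞ ≤ ε`,
`W₁(law(ψ^{(1)}_1(Z)), law(ψ^{(2)}_1(Z))) ≤ ε`, and there is a constant `c > 0` such that
`liminf_{ε→0⁺} TV(law(ψ^{(1)}_1(Z)), law(ψ^{(2)}_1(Z))) ≥ c`. -/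
theorem tv_unsuitable_for_flow_matching :
    ∃ c : ℝ, 0 < c ∧
      ∀ (Ψ₁ : ℝ → ℝ → ℝ) (Ψ₂ : ℝ → ℝ → ℝ → ℝ),
        ((∀ x, Ψ₁ 0 x = x) ∧
          ∀ x, ∀ t ∈ Set.Icc (0:ℝ) 1, HasDerivAt (fun s => Ψ₁ s x) 0 t) →
        (∀ ε : ℝ, 0 < ε → (∀ x, Ψ₂ ε 0 x = x) ∧
          ∀ x, ∀ t ∈ Set.Icc (0:ℝ) 1,
            HasDerivAt (fun s => Ψ₂ ε s x) (ε * Real.sin (Ψ₂ ε t x / ε)) t) →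
        (∀ ε : ℝ, 0 < ε → ∀ t ∈ Set.Icc (0:ℝ) 1, ∀ x : ℝ,
            |(0:ℝ) - ε * Real.sin (x / ε)| ≤ ε) ∧
        (∀ ε : ℝ, 0 < ε →
            W1 (Measure.map (Ψ₁ 1) (gaussianReal 0 1))
              (Measure.map (Ψ₂ ε 1) (gaussianReal 0 1)) ≤ ε) ∧
        c ≤ Filter.liminf
              (fun ε => TV (Measure.map (Ψ₁ 1) (gaussianReal 0 1))
                (Measure.map (Ψ₂ ε 1) (gaussianReal 0 1)))
              (nhdsWithin 0 (Set.Ioi 0)) := by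
  refine ⟨1/10, by norm_num, ?_⟩
  intro Ψ₁ Ψ₂ hΨ₁ hΨ₂
  obtain ⟨hΨ₁0, hΨ₁d⟩ := hΨ₁
  -- Ψ₁ 1 is the identity
  have hΨ₁1 : ∀ x, Ψ₁ 1 x = x := by
    intro x
    have hb := Convex.norm_image_sub_le_of_norm_hasDerivWithin_le
      (f := fun s => Ψ₁ s x) (f' := fun _ => 0) (s := Set.Icc 0 1) (C := 0)
      (fun t ht => (hΨ₁d x t ht).hasDerivWithinAt) (fun t _ => by simp)
      (convex_Icc 0 1) (Set.left_mem_Icc.mpr zero_le_one) (Set.right_mem_Icc.mpr zero_le_one)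
    have h0 : |Ψ₁ 1 x - x| ≤ 0 := by
      simpa [hΨ₁0 x, Real.norm_eq_abs] using hb
    have h1 := abs_nonneg (Ψ₁ 1 x - x)
    have h2 : Ψ₁ 1 x - x = 0 := abs_eq_zero.mp (le_antisymm h0 h1)
    linarith
  have hmapid : Measure.map (Ψ₁ 1) (gaussianReal 0 1) = gaussianReal 0 1 := by
    rw [show Ψ₁ 1 = id from funext hΨ₁1, Measure.map_id]
  have habs_sin : ∀ y : ℝ, |Real.sin y| ≤ 1 :=
    fun y => abs_le.mpr ⟨Real.neg_one_le_sin y, Real.sin_le_one y⟩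
  -- transport bound for Ψ₂
  have hT : ∀ ε : ℝ, 0 < ε → ∀ x, |Ψ₂ ε 1 x - x| ≤ ε := by
    intro ε hε x
    have hb := Convex.norm_image_sub_le_of_norm_hasDerivWithin_le
      (f := fun s => Ψ₂ ε s x) (f' := fun t => ε * Real.sin (Ψ₂ ε t x / ε))
      (s := Set.Icc 0 1) (C := ε)
      (fun t ht => ((hΨ₂ ε hε).2 x t ht).hasDerivWithinAt)
      (fun t _ => by
        rw [Real.norm_eq_abs, abs_mul, abs_of_pos hε]
        exact mul_le_of_le_one_right hε.le (habs_sin _))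
      (convex_Icc 0 1) (Set.left_mem_Icc.mpr zero_le_one) (Set.right_mem_Icc.mpr zero_le_one)
    simpa [(hΨ₂ ε hε).1 x, Real.norm_eq_abs] using hb
  refine ⟨?_, ?_, ?_⟩
  · -- (i)
    intro ε hε t _ x
    rw [zero_sub, abs_neg, abs_mul, abs_of_pos hε]
    exact mul_le_of_le_one_right hε.le (habs_sin _)
  · -- (ii) W1 bound
    intro ε hε
    rw [hmapid]
    by_cases hmeas : AEMeasurable (Ψ₂ ε 1) (gaussianReal 0 1)
    · unfold W1
      refine Real.iSup_le (fun f => ?_) hε.le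
      rcases f with ⟨f, hf⟩
      have hfc : Continuous f := hf.continuous
      simp only
      rw [integral_map hmeas hfc.aestronglyMeasurable]
      have hfm : AEStronglyMeasurable (fun x => f (Ψ₂ ε 1 x)) (gaussianReal 0 1) :=
        (hfc.measurable.comp_aemeasurable hmeas).aestronglyMeasurable
      have hdiff_bd : ∀ x, ‖f (Ψ₂ ε 1 x) - f x‖ ≤ ε := by
        intro x
        rw [Real.norm_eq_abs]
        have h1 := hf.dist_le_mul (Ψ₂ ε 1 x) x
        rw [Real.dist_eq, Real.dist_eq] at h1
        simp only [NNReal.coe_one, one_mul] at h1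
        exact le_trans h1 (hT ε hε x)
      by_cases hint : Integrable f (gaussianReal 0 1)
      · have hdiff : Integrable (fun x => f (Ψ₂ ε 1 x) - f x) (gaussianReal 0 1) := by
          refine Integrable.mono' (integrable_const ε) (hfm.sub hint.1)
            (Filter.Eventually.of_forall hdiff_bd)
        have hs : Integrable (fun x => f (Ψ₂ ε 1 x)) (gaussianReal 0 1) := by
          have heq : (fun x => f (Ψ₂ ε 1 x))
              = (fun x => f (Ψ₂ ε 1 x) - f x) + f := by funext y; simp
          rw [heq]
          exact hdiff.add hint
        rw [← integral_sub hint hs]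
        calc ∫ x, (f x - f (Ψ₂ ε 1 x)) ∂(gaussianReal 0 1)
            ≤ ∫ _x, ε ∂(gaussianReal 0 1) := by
              refine integral_mono (hint.sub hs) (integrable_const ε) (fun x => ?_)
              have := hdiff_bd x
              rw [Real.norm_eq_abs, abs_le] at this
              linarith [this.1]
          _ = ε := by simp
      · have hs : ¬ Integrable (fun x => f (Ψ₂ ε 1 x)) (gaussianReal 0 1) := by
          intro hcon
          have hdiff : Integrable (fun x => f (Ψ₂ ε 1 x) - f x) (gaussianReal 0 1) := by
            refine Integrable.mono' (integrable_const ε) (hfm.sub (hfc.aestronglyMeasurable))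
              (Filter.Eventually.of_forall hdiff_bd)
          refine hint ?_
          have heq : f = (fun x => f (Ψ₂ ε 1 x)) - (fun x => f (Ψ₂ ε 1 x) - f x) := by
            funext y; simp
          rw [heq]
          exact hcon.sub hdiff
        rw [integral_undef hint, integral_undef hs]
        simpa using hε.le
    · rw [Measure.map_of_not_aemeasurable hmeas]
      unfold W1
      have hnb : ¬ BddAbove (Set.range fun g : {f : ℝ → ℝ // LipschitzWith 1 f} =>
          (∫ x, g.1 x ∂(gaussianReal 0 1)) - ∫ x, g.1 x ∂(0 : Measure ℝ)) := by
        rintro ⟨M, hM⟩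
        have hc : ∀ C : ℝ, C ≤ M := by
          intro C
          have hmem := hM (Set.mem_range_self (⟨fun _ => C,
            (LipschitzWith.const C).weaken zero_le_one⟩ : {f : ℝ → ℝ // LipschitzWith 1 f}))
          simpa using hmem
        linarith [hc (M + 1)]
      rw [Real.iSup_of_not_bddAbove hnb]
      exact hε.le
  · -- (iii) liminf of TV
    have hbound : ∀ ε' : ℝ, TV (Measure.map (Ψ₁ 1) (gaussianReal 0 1))
        (Measure.map (Ψ₂ ε' 1) (gaussianReal 0 1)) ≤ 1 := by
      intro ε'
      unfold TV
      refine Real.iSup_le (fun A => ?_) zero_le_one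
      have hP := map_gauss_le_one (Ψ₁ 1) A.1
      have hQ := map_gauss_le_one (Ψ₂ ε' 1) A.1
      have hP' : ((Measure.map (Ψ₁ 1) (gaussianReal 0 1)) A.1).toReal ≤ 1 := by
        have := ENNReal.toReal_mono ENNReal.one_ne_top hP
        simpa using this
      have hQ' : ((Measure.map (Ψ₂ ε' 1) (gaussianReal 0 1)) A.1).toReal ≤ 1 := by
        have := ENNReal.toReal_mono ENNReal.one_ne_top hQ
        simpa using this
      have ha0 : 0 ≤ ((Measure.map (Ψ₁ 1) (gaussianReal 0 1)) A.1).toReal := ENNReal.toReal_nonneg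
      have hb0 : 0 ≤ ((Measure.map (Ψ₂ ε' 1) (gaussianReal 0 1)) A.1).toReal := ENNReal.toReal_nonneg
      rw [abs_le]
      exact ⟨by linarith, by linarith⟩
    refine Filter.le_liminf_of_le ?_ ?_
    · exact (Filter.isBoundedUnder_of ⟨1, fun ε' => hbound ε'⟩).isCoboundedUnder_ge
    · filter_upwards [Ioc_mem_nhdsGT_of_mem (c := (0:ℝ)) (a := 1/1000)
        (Set.mem_Ico.mpr ⟨le_rfl, by norm_num⟩)] with ε' hε'
      obtain ⟨hε'0, hε'1⟩ := hε'
      rw [hmapid]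
      by_cases hmeas : AEMeasurable (Ψ₂ ε' 1) (gaussianReal 0 1)
      · -- main case
        have hpre : (Bplus ε' ∪ (fun y : ℝ => -y) ⁻¹' (Bplus ε')) ⊆ (Ψ₂ ε' 1) ⁻¹' (Aset ε') := by
          intro x hx
          obtain ⟨k, hk1, hk2⟩ := Bfull_cells hε'0 hx
          have hode := ode_lemma hε'0 (ψ := fun s => Ψ₂ ε' s x)
            (fun t ht => (hΨ₂ ε' hε'0).2 x t ht) (k := k)
            (by simpa [(hΨ₂ ε' hε'0).1 x] using hk1)
            (by simpa [(hΨ₂ ε' hε'0).1 x] using hk2)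
          rw [mem_preimage, Aset, mem_iUnion]
          exact ⟨k, hode.1, hode.2⟩
        have hQA : ENNReal.ofReal 0.67 ≤ (Measure.map (Ψ₂ ε' 1) (gaussianReal 0 1)) (Aset ε') := by
          rw [Measure.map_apply_of_aemeasurable hmeas (Aset_measurable ε')]
          exact le_trans (Bplus_lower hε'0 hε'1) (measure_mono hpre)
        have hPA : gaussianReal 0 1 (Aset ε') ≤ ENNReal.ofReal 0.51 := Aset_upper hε'0 hε'1
        have hQfin : (Measure.map (Ψ₂ ε' 1) (gaussianReal 0 1)) (Aset ε') ≠ ⊤ := by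
          have : IsProbabilityMeasure (Measure.map (Ψ₂ ε' 1) (gaussianReal 0 1)) :=
            Measure.isProbabilityMeasure_map hmeas
          exact measure_ne_top _ _
        have h1 : (gaussianReal 0 1 (Aset ε')).toReal ≤ 0.51 := by
          have := ENNReal.toReal_mono ENNReal.ofReal_ne_top hPA
          rwa [ENNReal.toReal_ofReal (by norm_num)] at this
        have h2 : (0.67:ℝ) ≤ ((Measure.map (Ψ₂ ε' 1) (gaussianReal 0 1)) (Aset ε')).toReal := by
          have := ENNReal.toReal_mono hQfin hQA
          rwa [ENNReal.toReal_ofReal (by norm_num)] at this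
        unfold TV
        have hbdd : BddAbove (Set.range fun A : {A : Set ℝ // MeasurableSet A} =>
            |((gaussianReal 0 1) A.1).toReal
              - ((Measure.map (Ψ₂ ε' 1) (gaussianReal 0 1)) A.1).toReal|) := by
          refine ⟨2, ?_⟩
          rintro y ⟨A, rfl⟩
          have hP : (gaussianReal 0 1) A.1 ≤ 1 := prob_le_one
          have hQ := map_gauss_le_one (Ψ₂ ε' 1) A.1
          have hP' : ((gaussianReal 0 1) A.1).toReal ≤ 1 := by
            have := ENNReal.toReal_mono ENNReal.one_ne_top hP
            simpa using this
          have hQ' : ((Measure.map (Ψ₂ ε' 1) (gaussianReal 0 1)) A.1).toReal ≤ 1 := by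
            have := ENNReal.toReal_mono ENNReal.one_ne_top hQ
            simpa using this
          have ha0 : 0 ≤ ((gaussianReal 0 1) A.1).toReal := ENNReal.toReal_nonneg
          have hb0 : 0 ≤ ((Measure.map (Ψ₂ ε' 1) (gaussianReal 0 1)) A.1).toReal :=
            ENNReal.toReal_nonneg
          rw [abs_le]
          exact ⟨by linarith, by linarith⟩
        refine le_trans ?_ (le_ciSup hbdd ⟨Aset ε', Aset_measurable ε'⟩)
        have habs : ((Measure.map (Ψ₂ ε' 1) (gaussianReal 0 1)) (Aset ε')).toReal
            - ((gaussianReal 0 1) (Aset ε')).toReal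
            ≤ |((gaussianReal 0 1) (Aset ε')).toReal
                - ((Measure.map (Ψ₂ ε' 1) (gaussianReal 0 1)) (Aset ε')).toReal| := by
          rw [abs_sub_comm]
          exact le_abs_self _
        linarith
      · rw [Measure.map_of_not_aemeasurable hmeas]
        unfold TV
        have hbdd : BddAbove (Set.range fun A : {A : Set ℝ // MeasurableSet A} =>
            |((gaussianReal 0 1) A.1).toReal - ((0 : Measure ℝ) A.1).toReal|) := by
          refine ⟨2, ?_⟩
          rintro y ⟨A, rfl⟩
          have hP : (gaussianReal 0 1) A.1 ≤ 1 := prob_le_one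
          have hP' : ((gaussianReal 0 1) A.1).toReal ≤ 1 := by
            have := ENNReal.toReal_mono ENNReal.one_ne_top hP
            simpa using this
          simp only [Measure.coe_zero, Pi.zero_apply, ENNReal.toReal_zero, sub_zero]
          rw [abs_le]
          exact ⟨by linarith [ENNReal.toReal_nonneg (a := (gaussianReal 0 1) A.1)], by linarith⟩
        refine le_trans ?_ (le_ciSup hbdd ⟨Set.univ, MeasurableSet.univ⟩)
        simp only [Measure.coe_zero, Pi.zero_apply, ENNReal.toReal_zero, sub_zero, measure_univ,
          ENNReal.toReal_one]
        norm_num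

end
end

section
/- Let α ∈ (0,1], Λ > 0 and let p* be a probability density on ℝ^d with ∫|p*(x+h) − p*(x)| dx ≤ Λ|h|^α for all h ∈ ℝ^d. Let K be a nonnegative probability density on ℝ^d with ∫ y K(y) dy = 0 and m := ∫ |y|^{1+α} K(y) dy < ∞, and set K_σ(x) = σ^{-d} K(x/σ). Then there is a constant C depending only on d, Λ and m such that for every σ > 0 and every 1-Lipschitz function f : ℝ^d → ℝ, ∫ f(z) (p*(z) − (K_σ ∗ p*)(z)) dz ≤ C σ^{1+α}. -/
open MeasureTheory

open Filter Topology

section Aux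

variable {d : ℕ}

local notation "E" => EuclideanSpace ℝ (Fin d)

private lemma le_one_add_rpow {α : ℝ} (hα : 0 < α) {t : ℝ} (ht : 0 ≤ t) :
    t ≤ 1 + t ^ (1 + α) := by
  rcases le_total t 1 with h | h
  · have := Real.rpow_nonneg ht (1 + α); linarith
  · calc t = t ^ (1:ℝ) := (Real.rpow_one t).symm
      _ ≤ t ^ (1 + α) := Real.rpow_le_rpow_of_exponent_le h (by linarith)
      _ ≤ 1 + t ^ (1 + α) := by linarith

set_option maxHeartbeats 1000000 in
private lemma keyBounded (α Λ : ℝ) (hα0 : 0 < α) (hΛ : 0 < Λ)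
    (p Q : E → ℝ)
    (hp0 : ∀ x, 0 ≤ p x) (hpi : Integrable p) (hp1 : (∫ x, p x) = 1)
    (hpH : ∀ h : E, (∫ x, |p (x + h) - p x|) ≤ Λ * ‖h‖ ^ α)
    (hQ0 : ∀ x, 0 ≤ Q x) (hQi : Integrable Q) (hQ1 : (∫ x, Q x) = 1)
    (hQm : Integrable (fun w : E => ‖w‖ ^ (1 + α) * Q w))
    (hQmean : (∫ w : E, Q w • w) = (0 : EuclideanSpace ℝ (Fin d)))
    (g : E → ℝ) (hg : LipschitzWith 1 g)
    (R : ℝ) (hgR : ∀ z, |g z| ≤ R) :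
    (∫ z : E, g z * (p z - ∫ y : E, Q (z - y) * p y)) ≤
      (Λ * ((2:ℝ)⁻¹ ^ α / (2 * (1 - (2:ℝ)⁻¹ ^ α)))) * ∫ w : E, ‖w‖ ^ (1 + α) * Q w := by
  have hgm : Continuous g := hg.continuous
  have hgabs : ∀ z w : E, |g z - g (z + w)| ≤ ‖w‖ := by
    intro z w
    have h := hg.dist_le_mul z (z + w)
    rw [NNReal.coe_one, one_mul, dist_eq_norm, dist_eq_norm, sub_add_cancel_left,
      norm_neg, Real.norm_eq_abs] at h
    exact h
  have hgshift : ∀ w : E, Continuous fun z : E => g (z + w) := fun w =>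
    hgm.comp (continuous_id.add continuous_const)
  -- the elementary "A" function
  set A : E → ℝ := fun w => ∫ z : E, (g z - g (z + w)) * p z with hAdef
  have hint1 : ∀ w : E, Integrable fun z : E => (g z - g (z + w)) * p z := by
    intro w
    refine hpi.bdd_mul ((hgm.sub (hgshift w)).aestronglyMeasurable) (c := ‖w‖) (ae_of_all _ fun z => ?_)
    rw [Real.norm_eq_abs]; exact hgabs z w
  have hint2 : ∀ w u : E, Integrable fun z : E => (g z - g (z + w)) * p (z - u) := by
    intro w u
    refine (hpi.comp_sub_right u).bdd_mul
      ((hgm.sub (hgshift w)).aestronglyMeasurable) (c := ‖w‖) (ae_of_all _ fun z => ?_)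
    rw [Real.norm_eq_abs]; exact hgabs z w
  have hAle : ∀ w : E, |A w| ≤ ‖w‖ := by
    intro w
    have h1 : |A w| ≤ ∫ z : E, |g z - g (z + w)| * |p z| := by
      simpa [Real.norm_eq_abs, abs_mul] using norm_integral_le_integral_norm
        (fun z : E => (g z - g (z + w)) * p z)
    have hi : Integrable fun z : E => |g z - g (z + w)| * |p z| := by
      simpa [abs_mul] using (hint1 w).abs
    have h2 : (∫ z : E, |g z - g (z + w)| * |p z|) ≤ ∫ z : E, ‖w‖ * p z := by
      refine integral_mono hi (hpi.const_mul ‖w‖) fun z => ?_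
      rw [abs_of_nonneg (hp0 z)]
      exact mul_le_mul_of_nonneg_right (hgabs z w) (hp0 z)
    calc |A w| ≤ ∫ z : E, ‖w‖ * p z := h1.trans h2
      _ = ‖w‖ := by rw [integral_const_mul, hp1, mul_one]
  have hAadd : ∀ u v : E, |A (u + v) - A u - A v| ≤ Λ * (‖v‖ * ‖u‖ ^ α) := by
    intro u v
    have e1 : A (u + v) - A u = ∫ z : E, (g z - g (z + v)) * p (z - u) := by
      have t1 : (∫ z : E, (g z - g (z + v)) * p (z - u))
          = ∫ z : E, (g (z + u) - g (z + u + v)) * p z := by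
        rw [← integral_add_right_eq_self (fun z : E => (g z - g (z + v)) * p (z - u)) u]
        congr 1
        funext z
        rw [add_sub_cancel_right]
      rw [t1, hAdef]
      rw [← integral_sub (hint1 (u + v)) (hint1 u)]
      congr 1
      funext z
      rw [← add_assoc]
      ring
    have e2 : A (u + v) - A u - A v = ∫ z : E, (g z - g (z + v)) * (p (z - u) - p z) := by
      have t3 : A (u + v) - A u - A v
          = (∫ z : E, (g z - g (z + v)) * p (z - u)) - ∫ z : E, (g z - g (z + v)) * p z := by
        rw [e1]
      rw [t3, ← integral_sub (hint2 v u) (hint1 v)]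
      congr 1; funext z; ring
    rw [e2]
    have hi0 : Integrable fun z : E => (g z - g (z + v)) * (p (z - u) - p z) := by
      have h := (hint2 v u).sub (hint1 v)
      simpa [mul_sub, Pi.sub_def] using h
    have b1 : |∫ z : E, (g z - g (z + v)) * (p (z - u) - p z)|
        ≤ ∫ z : E, |g z - g (z + v)| * |p (z - u) - p z| := by
      simpa [Real.norm_eq_abs, abs_mul] using norm_integral_le_integral_norm
        (fun z : E => (g z - g (z + v)) * (p (z - u) - p z))
    have hi2 : Integrable fun z : E => |g z - g (z + v)| * |p (z - u) - p z| := by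
      simpa [abs_mul] using hi0.abs
    have hi3 : Integrable fun z : E => |p (z - u) - p z| := ((hpi.comp_sub_right u).sub hpi).abs
    have b2 : (∫ z : E, |g z - g (z + v)| * |p (z - u) - p z|)
        ≤ ∫ z : E, ‖v‖ * |p (z - u) - p z| := by
      refine integral_mono hi2 (hi3.const_mul ‖v‖) fun z => ?_
      exact mul_le_mul_of_nonneg_right (hgabs z v) (abs_nonneg _)
    have b3 : (∫ z : E, ‖v‖ * |p (z - u) - p z|) ≤ ‖v‖ * (Λ * ‖u‖ ^ α) := by
      rw [integral_const_mul]
      refine mul_le_mul_of_nonneg_left ?_ (norm_nonneg v)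
      simpa [norm_neg, sub_eq_add_neg] using hpH (-u)
    calc |∫ z : E, (g z - g (z + v)) * (p (z - u) - p z)|
        ≤ ‖v‖ * (Λ * ‖u‖ ^ α) := b1.trans (b2.trans b3)
      _ = Λ * (‖v‖ * ‖u‖ ^ α) := by ring
  -- geometric setup
  set r : ℝ := (2:ℝ)⁻¹ ^ α with hrdef
  have hr0 : 0 ≤ r := Real.rpow_nonneg (by norm_num) α
  have hr1 : r < 1 := by
    rw [hrdef]; exact Real.rpow_lt_one (by norm_num) (by norm_num) hα0
  have h1r : 0 < 1 - r := by linarith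
  have hbpow : ∀ n : ℕ, (((2:ℝ)⁻¹) ^ n) ^ α = r ^ n := by
    intro n
    rw [hrdef, ← Real.rpow_natCast (2:ℝ)⁻¹ n, ← Real.rpow_mul (by norm_num), mul_comm,
      Real.rpow_mul (by norm_num), Real.rpow_natCast]
  have hnormsmul : ∀ (n : ℕ) (w : E), ‖(((2:ℝ)⁻¹) ^ n) • w‖ = ((2:ℝ)⁻¹) ^ n * ‖w‖ := by
    intro n w
    rw [norm_smul, Real.norm_eq_abs, abs_of_nonneg (by positivity)]
  have hone : (1:ℝ) + α ≠ 0 := by positivity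
  have hwpow : ∀ t : ℝ, 0 ≤ t → t ^ (1 + α) = t * t ^ α := by
    intro t ht
    rw [Real.rpow_add' ht hone, Real.rpow_one]
  set s : E → ℕ → ℝ := fun w n => (2:ℝ) ^ n * A ((((2:ℝ)⁻¹) ^ n) • w) with hsdef
  have hstep : ∀ (w : E) (n : ℕ),
      dist (s w n) (s w (n+1)) ≤ (Λ * ‖w‖ ^ (1 + α) * r / 2) * r ^ n := by
    intro w n
    have hu : (((2:ℝ)⁻¹) ^ n) • w
        = (((2:ℝ)⁻¹) ^ (n+1)) • w + (((2:ℝ)⁻¹) ^ (n+1)) • w := by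
      rw [← add_smul]; congr 1; rw [pow_succ]; ring
    have h := hAadd ((((2:ℝ)⁻¹) ^ (n+1)) • w) ((((2:ℝ)⁻¹) ^ (n+1)) • w)
    rw [← hu] at h
    have e1 : s w n - s w (n+1) = (2:ℝ) ^ n * (A ((((2:ℝ)⁻¹) ^ n) • w)
        - A ((((2:ℝ)⁻¹) ^ (n+1)) • w) - A ((((2:ℝ)⁻¹) ^ (n+1)) • w)) := by
      simp only [hsdef]; ring
    rw [Real.dist_eq, e1, abs_mul, abs_of_nonneg (by positivity : (0:ℝ) ≤ (2:ℝ) ^ n)]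
    have hb2 : (2:ℝ) ^ n * (Λ * (‖(((2:ℝ)⁻¹) ^ (n+1)) • w‖ * ‖(((2:ℝ)⁻¹) ^ (n+1)) • w‖ ^ α))
        = (Λ * ‖w‖ ^ (1 + α) * r / 2) * r ^ n := by
      rw [hnormsmul, Real.mul_rpow (by positivity) (norm_nonneg w), hbpow,
        hwpow ‖w‖ (norm_nonneg w), pow_succ ((2:ℝ)⁻¹) n, pow_succ r n]
      field_simp
      ring_nf
      rw [mul_assoc, ← mul_pow]; norm_num
    calc (2:ℝ) ^ n * |A ((((2:ℝ)⁻¹) ^ n) • w) - A ((((2:ℝ)⁻¹) ^ (n+1)) • w)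
          - A ((((2:ℝ)⁻¹) ^ (n+1)) • w)|
        ≤ (2:ℝ) ^ n * (Λ * (‖(((2:ℝ)⁻¹) ^ (n+1)) • w‖ * ‖(((2:ℝ)⁻¹) ^ (n+1)) • w‖ ^ α)) :=
          mul_le_mul_of_nonneg_left h (by positivity)
      _ = _ := hb2
  have hcauchy : ∀ w : E, CauchySeq (s w) := fun w =>
    cauchySeq_of_le_geometric r _ hr1 (hstep w)
  set L : E → ℝ := fun w => limUnder atTop (s w) with hLdef
  have hLt : ∀ w : E, Tendsto (s w) atTop (𝓝 (L w)) := fun w => (hcauchy w).tendsto_limUnder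
  have hs0 : ∀ w : E, s w 0 = A w := by
    intro w; simp only [hsdef, pow_zero, one_smul, one_mul]
  have hAL : ∀ w : E, |A w - L w| ≤ Λ * (r / (2 * (1 - r))) * ‖w‖ ^ (1 + α) := by
    intro w
    have h := dist_le_of_le_geometric_of_tendsto₀ r _ hr1 (hstep w) (hLt w)
    rw [hs0 w, Real.dist_eq] at h
    calc |A w - L w| ≤ Λ * ‖w‖ ^ (1 + α) * r / 2 / (1 - r) := h
      _ = Λ * (r / (2 * (1 - r))) * ‖w‖ ^ (1 + α) := by field_simp
  have hLadd : ∀ u v : E, L (u + v) = L u + L v := by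
    intro u v
    have h1 : Tendsto (fun n => s (u + v) n - s u n - s v n) atTop
        (𝓝 (L (u + v) - L u - L v)) := ((hLt (u + v)).sub (hLt u)).sub (hLt v)
    have h2 : Tendsto (fun n => s (u + v) n - s u n - s v n) atTop (𝓝 0) := by
      have htend : Tendsto (fun n : ℕ => Λ * (‖v‖ * ‖u‖ ^ α) * r ^ n) atTop (𝓝 0) := by
        simpa using (tendsto_pow_atTop_nhds_zero_of_lt_one hr0 hr1).const_mul
          (Λ * (‖v‖ * ‖u‖ ^ α))
      refine squeeze_zero_norm ?_ htend
      intro n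
      · 
        have h := hAadd ((((2:ℝ)⁻¹) ^ n) • u) ((((2:ℝ)⁻¹) ^ n) • v)
        rw [← smul_add] at h
        have e1 : s (u + v) n - s u n - s v n = (2:ℝ) ^ n * (A ((((2:ℝ)⁻¹) ^ n) • (u + v))
            - A ((((2:ℝ)⁻¹) ^ n) • u) - A ((((2:ℝ)⁻¹) ^ n) • v)) := by
          simp only [hsdef]; ring
        rw [Real.norm_eq_abs, e1, abs_mul,
          abs_of_nonneg (by positivity : (0:ℝ) ≤ (2:ℝ) ^ n)]
        have e2 : (2:ℝ) ^ n * (Λ * (‖(((2:ℝ)⁻¹) ^ n) • v‖ * ‖(((2:ℝ)⁻¹) ^ n) • u‖ ^ α))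
            = Λ * (‖v‖ * ‖u‖ ^ α) * r ^ n := by
          rw [hnormsmul, hnormsmul, Real.mul_rpow (by positivity) (norm_nonneg u), hbpow]
          field_simp
          ring_nf
          rw [mul_assoc, ← mul_pow]; norm_num
        calc (2:ℝ) ^ n * |A ((((2:ℝ)⁻¹) ^ n) • (u + v)) - A ((((2:ℝ)⁻¹) ^ n) • u)
              - A ((((2:ℝ)⁻¹) ^ n) • v)|
            ≤ (2:ℝ) ^ n * (Λ * (‖(((2:ℝ)⁻¹) ^ n) • v‖ * ‖(((2:ℝ)⁻¹) ^ n) • u‖ ^ α)) :=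
              mul_le_mul_of_nonneg_left h (by positivity)
          _ = _ := e2
    have := tendsto_nhds_unique h1 h2
    linarith
  have hLsub : ∀ u v : E, L (u - v) = L u - L v := by
    intro u v
    have h := hLadd (u - v) v
    rw [sub_add_cancel] at h
    linarith
  have hLnorm : ∀ w : E, |L w| ≤ ‖w‖ + Λ * (r / (2 * (1 - r))) * ‖w‖ ^ (1 + α) := by
    intro w
    have h1 := hAL w
    have h2 := hAle w
    have h3 : |L w| ≤ |A w| + |A w - L w| := by
      calc |L w| = |A w - (A w - L w)| := by norm_num
        _ ≤ |A w| + |A w - L w| := abs_sub _ _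
    linarith
  have hLcont : Continuous L := by
    rw [continuous_iff_continuousAt]
    intro v
    have key : Tendsto (fun u : E => L u - L v) (𝓝 v) (𝓝 0) := by
      have hbnd : ∀ u : E, ‖L u - L v‖
          ≤ ‖u - v‖ + Λ * (r / (2 * (1 - r))) * ‖u - v‖ ^ (1 + α) := by
        intro u
        rw [Real.norm_eq_abs, ← hLsub u v]
        exact hLnorm _
      refine squeeze_zero_norm hbnd ?_
      · have h1 : Tendsto (fun u : E => ‖u - v‖) (𝓝 v) (𝓝 0) := by
          have := (continuous_id.sub (continuous_const (y := v))).norm.tendsto v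
          simpa using this
        have h2 : Tendsto (fun u : E => ‖u - v‖ ^ (1 + α)) (𝓝 v) (𝓝 0) := by
          have hc : ContinuousAt (fun t : ℝ => t ^ (1 + α)) 0 :=
            Real.continuousAt_rpow_const 0 (1 + α) (Or.inr (by linarith))
          have h3 := hc.tendsto.comp h1
          simpa [Real.zero_rpow hone, Function.comp_def] using h3
        simpa using h1.add (h2.const_mul (Λ * (r / (2 * (1 - r)))))
    have h5 : Tendsto L (𝓝 v) (𝓝 (L v)) := by
      have h3 := key.add_const (L v)
      simpa using h3
    exact h5
  set Lmap : EuclideanSpace ℝ (Fin d) →L[ℝ] ℝ :=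
    (AddMonoidHom.mk' L hLadd).toRealLinearMap hLcont with hLmapdef
  have hLmap : ∀ w : E, Lmap w = L w := fun w => rfl
  have hQdom : Integrable (fun w : E => Q w + ‖w‖ ^ (1 + α) * Q w) := hQi.add hQm
  have hQsw : Integrable (fun w : E => Q w • w) := by
    refine Integrable.mono' hQdom
      (hQi.aestronglyMeasurable.smul aestronglyMeasurable_id) (ae_of_all _ fun w => ?_)
    rw [norm_smul, Real.norm_eq_abs, abs_of_nonneg (hQ0 w)]
    calc Q w * ‖w‖ ≤ Q w * (1 + ‖w‖ ^ (1 + α)) :=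
          mul_le_mul_of_nonneg_left (le_one_add_rpow hα0 (norm_nonneg w)) (hQ0 w)
      _ = Q w + ‖w‖ ^ (1 + α) * Q w := by ring
  have hQL0 : (∫ w : E, Q w * L w) = 0 := by
    have h1 : (fun w : E => Q w * L w) = fun w : E => Lmap (Q w • w) := by
      funext w
      rw [Lmap.map_smul, hLmap, smul_eq_mul]
    rw [h1, Lmap.integral_comp_comm hQsw, hQmean, map_zero]
  have hQLint : Integrable (fun w : E => Q w * L w) := by
    have h1 := Lmap.integrable_comp hQsw
    refine h1.congr (ae_of_all _ fun w => ?_)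
    show Lmap (Q w • w) = Q w * L w
    rw [Lmap.map_smul, hLmap, smul_eq_mul]
  have hgabs2 : ∀ (z u v : E), |g (z + v) - g (z + u)| ≤ ‖u - v‖ := by
    intro z u v
    have hd := hg.dist_le_mul (z + v) (z + u)
    rw [NNReal.coe_one, one_mul, dist_eq_norm, dist_eq_norm] at hd
    calc |g (z + v) - g (z + u)| ≤ ‖z + v - (z + u)‖ := by
          simpa [Real.norm_eq_abs] using hd
      _ = ‖u - v‖ := by rw [show z + v - (z + u) = -(u - v) by abel, norm_neg]
  have hALip : LipschitzWith 1 A := by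
    refine LipschitzWith.of_dist_le_mul fun u v => ?_
    rw [NNReal.coe_one, one_mul, Real.dist_eq, dist_eq_norm]
    have e3 : A u - A v = ∫ z : E, (g (z + v) - g (z + u)) * p z := by
      simp only [hAdef]
      rw [← integral_sub (hint1 u) (hint1 v)]
      congr 1; funext z; ring
    rw [e3]
    have hi4 : Integrable fun z : E => (g (z + v) - g (z + u)) * p z := by
      refine hpi.bdd_mul (((hgshift v).sub (hgshift u)).aestronglyMeasurable)
        (c := ‖u - v‖) (ae_of_all _ fun z => ?_)
      rw [Real.norm_eq_abs]; exact hgabs2 z u v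
    have b1 : |∫ z : E, (g (z + v) - g (z + u)) * p z|
        ≤ ∫ z : E, |g (z + v) - g (z + u)| * |p z| := by
      simpa [Real.norm_eq_abs, abs_mul] using norm_integral_le_integral_norm
        (fun z : E => (g (z + v) - g (z + u)) * p z)
    have b2 : (∫ z : E, |g (z + v) - g (z + u)| * |p z|) ≤ ∫ z : E, ‖u - v‖ * p z := by
      refine integral_mono (by simpa [abs_mul] using hi4.abs) (hpi.const_mul _) fun z => ?_
      rw [abs_of_nonneg (hp0 z)]
      exact mul_le_mul_of_nonneg_right (hgabs2 z u v) (hp0 z)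
    calc |∫ z : E, (g (z + v) - g (z + u)) * p z| ≤ ∫ z : E, ‖u - v‖ * p z := b1.trans b2
      _ = ‖u - v‖ := by rw [integral_const_mul, hp1, mul_one]
  have hQAint : Integrable (fun w : E => Q w * A w) := by
    refine Integrable.mono' hQdom (hQi.aestronglyMeasurable.mul
      hALip.continuous.aestronglyMeasurable) (ae_of_all _ fun w => ?_)
    rw [Real.norm_eq_abs, abs_mul, abs_of_nonneg (hQ0 w)]
    calc Q w * |A w| ≤ Q w * (1 + ‖w‖ ^ (1 + α)) :=
          mul_le_mul_of_nonneg_left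
            ((hAle w).trans (le_one_add_rpow hα0 (norm_nonneg w))) (hQ0 w)
      _ = Q w + ‖w‖ ^ (1 + α) * Q w := by ring
  set D : ℝ := Λ * (r / (2 * (1 - r))) with hDdef
  have hQA_le : (∫ w : E, Q w * A w) ≤ D * ∫ w : E, ‖w‖ ^ (1 + α) * Q w := by
    have hQALint : Integrable (fun w : E => Q w * A w - Q w * L w) := hQAint.sub hQLint
    have hsub : (∫ w : E, Q w * A w)
        = (∫ w : E, Q w * L w) + ∫ w : E, (Q w * A w - Q w * L w) := by
      rw [← integral_add hQLint hQALint]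
      congr 1; funext w; ring
    rw [hsub, hQL0, zero_add]
    refine (integral_mono hQALint
      (hQm.const_mul D) fun w => ?_).trans (le_of_eq (by rw [integral_const_mul]))
    show Q w * A w - Q w * L w ≤ D * (‖w‖ ^ (1 + α) * Q w)
    have h1 : Q w * A w - Q w * L w = Q w * (A w - L w) := by ring
    rw [h1]
    calc Q w * (A w - L w) ≤ Q w * |A w - L w| :=
          mul_le_mul_of_nonneg_left (le_abs_self _) (hQ0 w)
      _ ≤ Q w * (D * ‖w‖ ^ (1 + α)) := by
          refine mul_le_mul_of_nonneg_left ?_ (hQ0 w)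
          calc |A w - L w| ≤ Λ * (r / (2 * (1 - r))) * ‖w‖ ^ (1 + α) := hAL w
            _ = D * ‖w‖ ^ (1 + α) := by rw [hDdef]
      _ = D * (‖w‖ ^ (1 + α) * Q w) := by ring
  -- Fubini part
  set q : E → ℝ := fun z => ∫ y : E, Q (z - y) * p y with hqdef
  have hqalt : ∀ z : E, q z = ∫ w : E, p (z - w) * Q w := by
    intro z
    have h := integral_sub_left_eq_self (fun w : E => p (z - w) * Q w) volume z
    rw [← h]
    simp only [hqdef, sub_sub_cancel]
    congr 1; funext y; ring
  have hgfstmeas : AEStronglyMeasurable (fun zw : E × E => g zw.1)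
      ((volume : Measure E).prod volume) := (hgm.comp continuous_fst).aestronglyMeasurable
  have hT2a : Integrable (fun zw : E × E => p (zw.1 - zw.2) * Q zw.2)
      ((volume : Measure E).prod volume) := by
    have hP2 : Integrable (fun zw : E × E => p zw.1 * Q zw.2)
        ((volume : Measure E).prod volume) := hpi.mul_prod hQi
    have hmp := measurePreserving_sub_prod (volume : Measure E) (volume : Measure E)
    have h1 := (hmp.integrable_comp hP2.aestronglyMeasurable).2 hP2
    simpa [Function.comp_def] using h1
  have hT2 : Integrable (fun zw : E × E => g zw.1 * (p (zw.1 - zw.2) * Q zw.2))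
      ((volume : Measure E).prod volume) := by
    refine hT2a.bdd_mul hgfstmeas (c := R) (ae_of_all _ fun zw => ?_)
    rw [Real.norm_eq_abs]; exact hgR _
  have hT1 : Integrable (fun zw : E × E => g zw.1 * p zw.1 * Q zw.2)
      ((volume : Measure E).prod volume) := by
    have hgp : Integrable (fun z : E => g z * p z) :=
      hpi.bdd_mul hgm.aestronglyMeasurable (c := R) (ae_of_all _ fun z => by
        rw [Real.norm_eq_abs]; exact hgR z)
    exact hgp.mul_prod hQi
  have hFint : Integrable (fun zw : E × E => Q zw.2 * (g zw.1 * (p zw.1 - p (zw.1 - zw.2))))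
      ((volume : Measure E).prod volume) := by
    have heq : (fun zw : E × E => Q zw.2 * (g zw.1 * (p zw.1 - p (zw.1 - zw.2))))
        = fun zw : E × E => g zw.1 * p zw.1 * Q zw.2 - g zw.1 * (p (zw.1 - zw.2) * Q zw.2) := by
      funext zw; ring
    rw [heq]
    exact hT1.sub hT2
  have hslice : ∀ᵐ z : E, Integrable fun w : E => p (z - w) * Q w := by
    have h1 := hT2a.prod_right_ae
    simpa using h1
  have hpt : ∀ᵐ z : E, g z * (p z - q z)
      = ∫ w : E, Q w * (g z * (p z - p (z - w))) := by
    filter_upwards [hslice] with z hz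
    have hi1 : Integrable fun w : E => Q w * (g z * p z) := hQi.mul_const _
    have hi2 : Integrable fun w : E => Q w * (g z * p (z - w)) := by
      have h := hz.const_mul (g z)
      refine h.congr (ae_of_all _ fun w => ?_)
      ring
    have e4 : (∫ w : E, Q w * (g z * (p z - p (z - w))))
        = (∫ w : E, Q w * (g z * p z)) - ∫ w : E, Q w * (g z * p (z - w)) := by
      rw [← integral_sub hi1 hi2]
      congr 1; funext w; ring
    have e5 : (∫ w : E, Q w * (g z * p z)) = g z * p z := by
      rw [integral_mul_const, hQ1, one_mul]
    have e6 : (∫ w : E, Q w * (g z * p (z - w))) = g z * q z := by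
      have h7 : (fun w : E => Q w * (g z * p (z - w)))
          = fun w : E => g z * (p (z - w) * Q w) := by
        funext w; ring
      rw [h7, integral_const_mul, ← hqalt z]
    rw [e4, e5, e6]
    ring
  have hswap : (∫ z : E, g z * (p z - q z))
      = ∫ w : E, ∫ z : E, Q w * (g z * (p z - p (z - w))) := by
    rw [integral_congr_ae hpt]
    exact integral_integral_swap hFint
  have hinner : ∀ w : E, (∫ z : E, Q w * (g z * (p z - p (z - w)))) = Q w * A w := by
    intro w
    rw [integral_const_mul]
    congr 1
    have hgpint : Integrable fun z : E => g z * p z :=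
      hpi.bdd_mul hgm.aestronglyMeasurable (c := R) (ae_of_all _ fun z => by
        rw [Real.norm_eq_abs]; exact hgR z)
    have hgpint2 : Integrable fun z : E => g z * p (z - w) :=
      (hpi.comp_sub_right w).bdd_mul hgm.aestronglyMeasurable (c := R) (ae_of_all _ fun z => by
        rw [Real.norm_eq_abs]; exact hgR z)
    have hgpint3 : Integrable fun z : E => g (z + w) * p z :=
      hpi.bdd_mul (hgshift w).aestronglyMeasurable (c := R) (ae_of_all _ fun z => by
        rw [Real.norm_eq_abs]; exact hgR _)
    have e8 : (∫ z : E, g z * (p z - p (z - w)))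
        = (∫ z : E, g z * p z) - ∫ z : E, g z * p (z - w) := by
      rw [← integral_sub hgpint hgpint2]
      congr 1; funext z; ring
    have e9 : (∫ z : E, g z * p (z - w)) = ∫ z : E, g (z + w) * p z := by
      rw [← integral_add_right_eq_self (fun z : E => g z * p (z - w)) w]
      congr 1; funext z; rw [add_sub_cancel_right]
    have e10 : A w = (∫ z : E, g z * p z) - ∫ z : E, g (z + w) * p z := by
      simp only [hAdef]
      rw [← integral_sub hgpint hgpint3]
      congr 1; funext z; ring
    rw [e8, e9, e10]
  calc (∫ z : E, g z * (p z - q z))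
      = ∫ w : E, ∫ z : E, Q w * (g z * (p z - p (z - w))) := hswap
    _ = ∫ w : E, Q w * A w := integral_congr_ae (ae_of_all _ fun w => hinner w)
    _ ≤ D * ∫ w : E, ‖w‖ ^ (1 + α) * Q w := hQA_le

set_option maxHeartbeats 1000000 in
private lemma key (α Λ : ℝ) (hα0 : 0 < α) (hΛ : 0 < Λ)
    (p Q : E → ℝ)
    (hp0 : ∀ x, 0 ≤ p x) (hpi : Integrable p) (hp1 : (∫ x, p x) = 1)
    (hpH : ∀ h : E, (∫ x, |p (x + h) - p x|) ≤ Λ * ‖h‖ ^ α)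
    (hQ0 : ∀ x, 0 ≤ Q x) (hQi : Integrable Q) (hQ1 : (∫ x, Q x) = 1)
    (hQm : Integrable (fun w : E => ‖w‖ ^ (1 + α) * Q w))
    (hQmean : (∫ w : E, Q w • w) = (0 : EuclideanSpace ℝ (Fin d)))
    (f : E → ℝ) (hf : LipschitzWith 1 f) :
    (∫ z : E, f z * (p z - ∫ y : E, Q (z - y) * p y)) ≤
      (Λ * ((2:ℝ)⁻¹ ^ α / (2 * (1 - (2:ℝ)⁻¹ ^ α)))) * ∫ w : E, ‖w‖ ^ (1 + α) * Q w := by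
  have hr0 : 0 ≤ (2:ℝ)⁻¹ ^ α := Real.rpow_nonneg (by norm_num) α
  have hr1 : (2:ℝ)⁻¹ ^ α < 1 := Real.rpow_lt_one (by norm_num) (by norm_num) hα0
  have hRHS0 : 0 ≤ (Λ * ((2:ℝ)⁻¹ ^ α / (2 * (1 - (2:ℝ)⁻¹ ^ α))))
      * ∫ w : E, ‖w‖ ^ (1 + α) * Q w := by
    apply mul_nonneg
    · apply mul_nonneg hΛ.le
      apply div_nonneg hr0
      nlinarith
    · exact integral_nonneg fun w => mul_nonneg (Real.rpow_nonneg (norm_nonneg w) _) (hQ0 w)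
  set q : E → ℝ := fun z => ∫ y : E, Q (z - y) * p y with hqdef
  show (∫ z : E, f z * (p z - q z)) ≤ _
  have hqalt : q = fun z : E => ∫ w : E, p (z - w) * Q w := by
    funext z
    have h := integral_sub_left_eq_self (fun w : E => p (z - w) * Q w) volume z
    rw [← h]
    simp only [hqdef, sub_sub_cancel]
    congr 1; funext y; ring
  have hT2a : Integrable (fun zw : E × E => p (zw.1 - zw.2) * Q zw.2)
      ((volume : Measure E).prod volume) := by
    have hP2 : Integrable (fun zw : E × E => p zw.1 * Q zw.2)
        ((volume : Measure E).prod volume) := hpi.mul_prod hQi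
    have hmp := measurePreserving_sub_prod (volume : Measure E) (volume : Measure E)
    have h1 := (hmp.integrable_comp hP2.aestronglyMeasurable).2 hP2
    simpa [Function.comp_def] using h1
  have hqint : Integrable q := by
    rw [hqalt]
    exact hT2a.integral_prod_left
  have hq1 : (∫ z : E, q z) = 1 := by
    rw [hqalt]
    rw [integral_integral_swap hT2a]
    have h2 : ∀ w : E, (∫ z : E, p (z - w) * Q w) = Q w := by
      intro w
      rw [integral_mul_const, integral_sub_right_eq_self p w, hp1, one_mul]
    rw [integral_congr_ae (ae_of_all _ h2), hQ1]
  have hpqint : Integrable (fun z : E => p z - q z) := hpi.sub hqint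
  have hpq0 : (∫ z : E, (p z - q z)) = 0 := by
    rw [integral_sub hpi hqint, hp1, hq1, sub_self]
  by_cases hI : Integrable (fun z : E => f z * (p z - q z))
  · set g : E → ℝ := fun z => f z - f 0 with hgdef
    have hgLip : LipschitzWith 1 g := by
      refine LipschitzWith.of_dist_le_mul fun x y => ?_
      simp only [hgdef]
      rw [dist_sub_right]
      exact hf.dist_le_mul x y
    have hgI : Integrable (fun z : E => g z * (p z - q z)) := by
      have h1 := hI.sub (hpqint.const_mul (f 0))
      refine h1.congr (ae_of_all _ fun z => ?_)
      show f z * (p z - q z) - f 0 * (p z - q z) = g z * (p z - q z)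
      simp only [hgdef]; ring
    have step0 : (∫ z : E, f z * (p z - q z)) = ∫ z : E, g z * (p z - q z) := by
      have h1 : (∫ z : E, f z * (p z - q z))
          = (∫ z : E, g z * (p z - q z)) + ∫ z : E, f 0 * (p z - q z) := by
        rw [← integral_add hgI (hpqint.const_mul (f 0))]
        congr 1; funext z; simp only [hgdef]; ring
      rw [h1, integral_const_mul, hpq0, mul_zero, add_zero]
    set gn : ℕ → E → ℝ := fun n z => max (-(n:ℝ)) (min (n:ℝ) (g z)) with hgndef
    have hgnLip : ∀ n, LipschitzWith 1 (gn n) := fun n => (hgLip.const_min _).const_max _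
    have hgnBd : ∀ (n : ℕ) (z : E), |gn n z| ≤ (n:ℝ) := by
      intro n z
      rw [abs_le]
      constructor
      · exact le_max_left _ _
      · exact max_le (neg_le_self (Nat.cast_nonneg n)) (min_le_left _ _)
    have hgnAbs : ∀ (n : ℕ) (z : E), |gn n z| ≤ |g z| := by
      intro n z
      rw [abs_le]
      constructor
      · refine le_max_of_le_right (le_min ?_ ?_)
        · exact (neg_nonpos.mpr (abs_nonneg _)).trans (Nat.cast_nonneg n)
        · exact neg_abs_le _
      · exact max_le ((neg_nonpos.mpr (Nat.cast_nonneg n)).trans (abs_nonneg _))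
          ((min_le_right _ _).trans (le_abs_self _))
    have hbound : ∀ n : ℕ, (∫ z : E, gn n z * (p z - q z))
        ≤ (Λ * ((2:ℝ)⁻¹ ^ α / (2 * (1 - (2:ℝ)⁻¹ ^ α))))
          * ∫ w : E, ‖w‖ ^ (1 + α) * Q w := by
      intro n
      exact keyBounded α Λ hα0 hΛ p Q hp0 hpi hp1 hpH hQ0 hQi hQ1 hQm hQmean
        (gn n) (hgnLip n) (n:ℝ) (fun z => hgnBd n z)
    have hlim : Tendsto (fun n => ∫ z : E, gn n z * (p z - q z)) atTop
        (𝓝 (∫ z : E, g z * (p z - q z))) := by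
      refine tendsto_integral_of_dominated_convergence
        (fun z => |g z * (p z - q z)|)
        (fun n => ((hgnLip n).continuous.aestronglyMeasurable.mul hpqint.aestronglyMeasurable))
        hgI.abs (fun n => ae_of_all _ fun z => ?_) (ae_of_all _ fun z => ?_)
      · show ‖gn n z * (p z - q z)‖ ≤ |g z * (p z - q z)|
        rw [Real.norm_eq_abs, abs_mul, abs_mul]
        exact mul_le_mul_of_nonneg_right (hgnAbs n z) (abs_nonneg _)
      · have hev : ∀ᶠ n : ℕ in atTop, gn n z = g z := by
          filter_upwards [eventually_ge_atTop ⌈|g z|⌉₊] with n hn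
          have h1 : |g z| ≤ (n:ℝ) := (Nat.le_ceil _).trans (Nat.cast_le.mpr hn)
          simp only [hgndef]
          rw [min_eq_right ((le_abs_self _).trans h1),
            max_eq_right ((neg_le_neg h1).trans (neg_abs_le _))]
        have hev' : ∀ᶠ n : ℕ in atTop, gn n z * (p z - q z) = g z * (p z - q z) :=
          hev.mono fun n h => by rw [h]
        exact tendsto_const_nhds.congr' (hev'.mono fun n h => h.symm)
    rw [step0]
    exact le_of_tendsto hlim (Eventually.of_forall hbound)
  · rw [integral_undef hI]
    exact hRHS0

end Aux


set_option maxHeartbeats 1000000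

/-- **Bias bound for kernel smoothing in Wasserstein-1 distance.**
Let `α ∈ (0,1]`, `Λ > 0`, `m ≥ 0`. There is a constant `C > 0` depending only on `d`, `Λ`
and `m` such that: for every probability density `p*` on `ℝ^d` with
`∫|p*(x+h) − p*(x)| dx ≤ Λ|h|^α` for all `h`, every nonnegative probability density kernel `K`
with `∫ y K(y) dy = 0` and `∫ |y|^{1+α} K(y) dy = m`, every bandwidth `σ > 0`, and every
1-Lipschitz `f : ℝ^d → ℝ`, one has
`∫ f(z)(p*(z) − (K_σ ∗ p*)(z)) dz ≤ C σ^{1+α}`, where `K_σ(x) = σ^{-d}K(x/σ)`. -/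
theorem kernel_smoothing_bias_bound (d : ℕ) (hd : 1 ≤ d)
    (α Λ m : ℝ) (hα : α ∈ Set.Ioc (0:ℝ) 1) (hΛ : 0 < Λ) (hm : 0 ≤ m) :
    ∃ C : ℝ, 0 < C ∧
      ∀ (pstar K : EuclideanSpace ℝ (Fin d) → ℝ),
        (∀ x, 0 ≤ pstar x) → Integrable pstar → (∫ x, pstar x = 1) →
        (∀ h : EuclideanSpace ℝ (Fin d), ∫ x, |pstar (x + h) - pstar x| ≤ Λ * ‖h‖ ^ α) →
        (∀ x, 0 ≤ K x) → Integrable K → (∫ x, K x = 1) →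
        (∫ y, K y • y = (0 : EuclideanSpace ℝ (Fin d))) →
        Integrable (fun y => ‖y‖ ^ (1 + α) * K y) →
        (∫ y, ‖y‖ ^ (1 + α) * K y = m) →
        ∀ σ : ℝ, 0 < σ →
        ∀ f : EuclideanSpace ℝ (Fin d) → ℝ, LipschitzWith 1 f →
          ∫ z, f z * (pstar z - ∫ y, (σ ^ d)⁻¹ * K (σ⁻¹ • (z - y)) * pstar y) ≤
            C * σ ^ (1 + α) := by
  obtain ⟨hα0, hα1⟩ := hα
  have hr0 : 0 ≤ (2:ℝ)⁻¹ ^ α := Real.rpow_nonneg (by norm_num) α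
  have hr1 : (2:ℝ)⁻¹ ^ α < 1 := Real.rpow_lt_one (by norm_num) (by norm_num) hα0
  set D : ℝ := Λ * ((2:ℝ)⁻¹ ^ α / (2 * (1 - (2:ℝ)⁻¹ ^ α))) with hDdef
  have hD0 : 0 ≤ D := mul_nonneg hΛ.le (div_nonneg hr0 (by nlinarith))
  have hDm0 : 0 ≤ D * m := mul_nonneg hD0 hm
  refine ⟨D * m + 1, by linarith, ?_⟩
  intro pstar K hp0 hpi hp1 hpH hK0 hKi hK1 hKmean hKm hKmval σ hσ f hf
  have hσ0 : σ ≠ 0 := hσ.ne'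
  have hσd : (0:ℝ) < σ ^ d := pow_pos hσ d
  set Q : EuclideanSpace ℝ (Fin d) → ℝ := fun x => (σ ^ d)⁻¹ * K (σ⁻¹ • x) with hQdef
  have hfr : Module.finrank ℝ (EuclideanSpace ℝ (Fin d)) = d := finrank_euclideanSpace_fin
  have habs : |((σ⁻¹ ^ d)⁻¹ : ℝ)| = σ ^ d := by
    rw [abs_of_pos (by positivity), ← inv_pow, inv_inv]
  have hQ0 : ∀ x, 0 ≤ Q x := fun x => mul_nonneg (inv_nonneg.mpr hσd.le) (hK0 _)
  have hQi : Integrable Q := (hKi.comp_smul (inv_ne_zero hσ0)).const_mul _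
  have hQ1 : (∫ x : EuclideanSpace ℝ (Fin d), Q x) = 1 := by
    simp only [hQdef]
    rw [integral_const_mul, Measure.integral_comp_smul volume K σ⁻¹, hfr, habs,
      smul_eq_mul, hK1, mul_one]
    exact inv_mul_cancel₀ hσd.ne'
  have hQmean : (∫ w : EuclideanSpace ℝ (Fin d), Q w • w) = 0 := by
    have hψ : (fun w : EuclideanSpace ℝ (Fin d) => Q w • w)
        = fun w : EuclideanSpace ℝ (Fin d) =>
          (fun x : EuclideanSpace ℝ (Fin d) => ((σ ^ d)⁻¹ * K x) • (σ • x)) (σ⁻¹ • w) := by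
      funext w
      simp only [hQdef, smul_smul, mul_inv_cancel₀ hσ0, mul_one]
    rw [hψ, Measure.integral_comp_smul volume
      (fun x : EuclideanSpace ℝ (Fin d) => ((σ ^ d)⁻¹ * K x) • (σ • x)) σ⁻¹, hfr, habs]
    have h2 : (∫ x : EuclideanSpace ℝ (Fin d), ((σ ^ d)⁻¹ * K x) • (σ • x))
        = ((σ ^ d)⁻¹ * σ) • ∫ x : EuclideanSpace ℝ (Fin d), K x • x := by
      rw [← integral_smul]
      congr 1; funext x
      simp only [smul_smul]
      congr 1
      ring
    rw [h2, hKmean, smul_zero, smul_zero]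
  have hσa : (0:ℝ) < σ ^ (1 + α) := Real.rpow_pos_of_pos hσ _
  set χ : EuclideanSpace ℝ (Fin d) → ℝ :=
    fun x => (σ ^ (1 + α) * (σ ^ d)⁻¹) * (‖x‖ ^ (1 + α) * K x) with hχdef
  have hχint : Integrable χ := hKm.const_mul _
  have hinv : σ ^ (1 + α) * (σ⁻¹) ^ (1 + α) = 1 := by
    rw [← Real.mul_rpow hσ.le (inv_nonneg.mpr hσ.le), mul_inv_cancel₀ hσ0, Real.one_rpow]
  have hχeq : (fun w : EuclideanSpace ℝ (Fin d) => ‖w‖ ^ (1 + α) * Q w)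
      = fun w : EuclideanSpace ℝ (Fin d) => χ (σ⁻¹ • w) := by
    funext w
    simp only [hχdef, hQdef]
    rw [norm_smul, Real.norm_eq_abs, abs_of_pos (inv_pos.mpr hσ),
      Real.mul_rpow (inv_nonneg.mpr hσ.le) (norm_nonneg w)]
    linear_combination (-((σ ^ d)⁻¹ * ‖w‖ ^ (1 + α) * K (σ⁻¹ • w))) * hinv
  have hQm : Integrable (fun w : EuclideanSpace ℝ (Fin d) => ‖w‖ ^ (1 + α) * Q w) := by
    rw [hχeq]
    exact hχint.comp_smul (inv_ne_zero hσ0)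
  have hQmval : (∫ w : EuclideanSpace ℝ (Fin d), ‖w‖ ^ (1 + α) * Q w) = σ ^ (1 + α) * m := by
    rw [hχeq, Measure.integral_comp_smul volume χ σ⁻¹, hfr, habs, smul_eq_mul]
    simp only [hχdef]
    rw [integral_const_mul, hKmval]
    field_simp
  have hmain := key α Λ hα0 hΛ pstar Q hp0 hpi hp1 hpH hQ0 hQi hQ1 hQm hQmean f hf
  rw [hQmval] at hmain
  calc ∫ z, f z * (pstar z - ∫ y, (σ ^ d)⁻¹ * K (σ⁻¹ • (z - y)) * pstar y)
      ≤ (Λ * ((2:ℝ)⁻¹ ^ α / (2 * (1 - (2:ℝ)⁻¹ ^ α)))) * (σ ^ (1 + α) * m) := hmain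
    _ = (D * m) * σ ^ (1 + α) := by rw [hDdef]; ring
    _ ≤ (D * m + 1) * σ ^ (1 + α) := by nlinarith
end

section
/- Let M ⊂ ℝ^d be a closed set with reach at least τ > 0, i.e., every point x ∈ ℝ^d with dist(x, M) < τ has a unique nearest point in M, and let π denote the nearest-point projection onto M. Then for every 0 < r < τ, π restricted to the tube B(r, M) = {x ∈ ℝ^d : dist(x, M) ≤ r} is Lipschitz with Lipschitz constant 1/(1 − r/τ): for all x, y ∈ B(r, M), |π(x) − π(y)| ≤ (1/(1 − r/τ)) |x − y|. -/
set_option maxHeartbeats 1000000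

open Metric Filter Topology

local notation "⟪" x ", " y "⟫" => @inner ℝ _ _ x y

section Aux

variable {d : ℕ} {M : Set (EuclideanSpace ℝ (Fin d))} {τ : ℝ}
  {π : EuclideanSpace ℝ (Fin d) → EuclideanSpace ℝ (Fin d)}

lemma reachAux_unique
    (hreach : ∀ x : EuclideanSpace ℝ (Fin d), infDist x M < τ →
      ∃! z : EuclideanSpace ℝ (Fin d), z ∈ M ∧ dist x z = infDist x M)
    (hπ : ∀ x : EuclideanSpace ℝ (Fin d), infDist x M < τ →
      π x ∈ M ∧ dist x (π x) = infDist x M)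
    {x c : EuclideanSpace ℝ (Fin d)} (hx : infDist x M < τ)
    (hc : c ∈ M) (hd : dist x c = infDist x M) : c = π x := by
  obtain ⟨z, _, huniq⟩ := hreach x hx
  rw [huniq c ⟨hc, hd⟩, huniq (π x) (hπ x hx)]

lemma reachAux_cont (hMclosed : IsClosed M)
    (hreach : ∀ x : EuclideanSpace ℝ (Fin d), infDist x M < τ →
      ∃! z : EuclideanSpace ℝ (Fin d), z ∈ M ∧ dist x z = infDist x M)
    (hπ : ∀ x : EuclideanSpace ℝ (Fin d), infDist x M < τ →
      π x ∈ M ∧ dist x (π x) = infDist x M)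
    {x : EuclideanSpace ℝ (Fin d)} (hx : infDist x M < τ) {κ : ℝ} (hκ : 0 < κ) :
    ∃ δ : ℝ, 0 < δ ∧ δ ≤ (τ - infDist x M)/2 ∧
      ∀ y, dist y x ≤ δ → dist (π y) (π x) ≤ κ := by
  by_contra hcon
  push_neg at hcon
  set t := infDist x M with ht
  have ht0 : 0 ≤ t := infDist_nonneg
  have hc2 : 0 < (τ - t)/2 := by simp only [ht]; linarith
  -- choose a bad sequence
  have hbad : ∀ k : ℕ, ∃ y, dist y x ≤ min ((τ - t)/2) (1/(k+1)) ∧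
      κ < dist (π y) (π x) := by
    intro k
    have hpos : 0 < min ((τ - t)/2) (1/(k+1)) := by
      apply lt_min hc2
      positivity
    exact hcon _ hpos (min_le_left _ _)
  choose y hy1 hy2 using hbad
  have hytube : ∀ k, infDist (y k) M < τ := by
    intro k
    have := infDist_le_infDist_add_dist (x := y k) (y := x) (s := M)
    have h2 : dist (y k) x ≤ (τ - t)/2 := le_trans (hy1 k) (min_le_left _ _)
    simp only [← ht] at this
    linarith
  have hyx : Tendsto y atTop (𝓝 x) := by
    rw [tendsto_iff_dist_tendsto_zero]
    apply squeeze_zero (fun k => dist_nonneg)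
      (fun k => le_trans (hy1 k) (min_le_right _ _))
    exact tendsto_one_div_add_atTop_nhds_zero_nat
  have hball : ∀ k, π (y k) ∈ closedBall x (2*τ) := by
    intro k
    have h1 : dist (π (y k)) (y k) = infDist (y k) M := by
      rw [dist_comm]; exact (hπ (y k) (hytube k)).2
    have h2 : dist (y k) x ≤ (τ - t)/2 := le_trans (hy1 k) (min_le_left _ _)
    have := (hytube k).le
    simp only [mem_closedBall]
    calc dist (π (y k)) x ≤ dist (π (y k)) (y k) + dist (y k) x := dist_triangle _ _ _
      _ ≤ τ + (τ - t)/2 := by rw [h1]; exact add_le_add this h2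
      _ ≤ 2*τ := by linarith
  obtain ⟨a, _, φ, hφ, hconv⟩ := (isCompact_closedBall x (2*τ)).tendsto_subseq hball
  have hyφ : Tendsto (fun k => y (φ k)) atTop (𝓝 x) := hyx.comp hφ.tendsto_atTop
  have haM : a ∈ M := by
    apply hMclosed.mem_of_tendsto hconv
    exact Eventually.of_forall (fun k => (hπ (y (φ k)) (hytube (φ k))).1)
  have hda : dist x a = t := by
    have l1 : Tendsto (fun k => dist (y (φ k)) (π (y (φ k)))) atTop (𝓝 (dist x a)) :=
      hyφ.dist hconv
    have l2 : Tendsto (fun k => dist (y (φ k)) (π (y (φ k)))) atTop (𝓝 t) := by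
      have : (fun k => dist (y (φ k)) (π (y (φ k)))) =
          (fun k => infDist (y (φ k)) M) := by
        funext k; exact (hπ (y (φ k)) (hytube (φ k))).2
      rw [this]
      exact ((continuous_infDist_pt M).tendsto x).comp hyφ
    exact tendsto_nhds_unique l1 l2
  have hax : a = π x := reachAux_unique hreach hπ hx haM hda
  have hlim : Tendsto (fun k => dist (π (y (φ k))) (π x)) atTop (𝓝 (dist a (π x))) :=
    hconv.dist tendsto_const_nhds
  have hge : κ ≤ dist a (π x) :=
    ge_of_tendsto hlim (Eventually.of_forall (fun k => (hy2 (φ k)).le))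
  rw [← hax, dist_self] at hge
  linarith

lemma reachAux_escape_eps (hMclosed : IsClosed M)
    (hreach : ∀ x : EuclideanSpace ℝ (Fin d), infDist x M < τ →
      ∃! z : EuclideanSpace ℝ (Fin d), z ∈ M ∧ dist x z = infDist x M)
    (hπ : ∀ x : EuclideanSpace ℝ (Fin d), infDist x M < τ →
      π x ∈ M ∧ dist x (π x) = infDist x M)
    {x : EuclideanSpace ℝ (Fin d)} {m ε : ℝ}
    (ht0 : 0 < infDist x M) (hm1 : infDist x M < m) (hmτ : m < τ)
    (hε : 0 < ε) (hε1 : ε ≤ 1) :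
    ∃ W, infDist W M = m ∧ dist W x ≤ (1+ε) * (m - infDist x M) := by
  set t := infDist x M with ht
  have htτ : t < τ := hm1.trans hmτ
  set A : Set ℝ :=
    {ρ | ρ ∈ Set.Icc t m ∧ ∃ W, infDist W M = ρ ∧ dist W x ≤ (1+ε) * (ρ - t)} with hA
  have htA : t ∈ A := ⟨⟨le_refl t, hm1.le⟩, x, rfl, by simp⟩
  have hbdd : BddAbove A := ⟨m, fun ρ hρ => hρ.1.2⟩
  set ρs := sSup A with hρs
  have hρsIcc : ρs ∈ Set.Icc t m :=
    ⟨le_csSup hbdd htA, csSup_le ⟨t, htA⟩ (fun ρ hρ => hρ.1.2)⟩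
  have hρ0 : 0 < ρs := lt_of_lt_of_le ht0 hρsIcc.1
  -- ρs is achieved
  obtain ⟨f, -, hf_t, hf_mem⟩ := exists_seq_tendsto_sSup ⟨t, htA⟩ hbdd
  choose W hW1 hW2 using fun k => (hf_mem k).2
  have hWball : ∀ k, W k ∈ closedBall x ((1+ε)*(m - t)) := by
    intro k
    have h1 : f k - t ≤ m - t := by have := (hf_mem k).1.2; linarith
    have h2 : (1+ε)*(f k - t) ≤ (1+ε)*(m - t) := by nlinarith
    exact mem_closedBall.mpr (le_trans (hW2 k) h2)
  obtain ⟨Ws, -, φ, hφ, hconv⟩ := (isCompact_closedBall _ _).tendsto_subseq hWball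
  have hfφ : Tendsto (fun k => f (φ k)) atTop (𝓝 ρs) := hf_t.comp hφ.tendsto_atTop
  have hWs_d : infDist Ws M = ρs := by
    refine tendsto_nhds_unique ?_ hfφ
    have l1 : Tendsto (fun k => infDist (W (φ k)) M) atTop (𝓝 (infDist Ws M)) :=
      ((continuous_infDist_pt M).tendsto Ws).comp hconv
    have : (fun k => infDist (W (φ k)) M) = fun k => f (φ k) := by
      funext k; exact hW1 (φ k)
    rwa [this] at l1
  have hWs_dist : dist Ws x ≤ (1+ε)*(ρs - t) := by
    have l1 : Tendsto (fun k => dist (W (φ k)) x) atTop (𝓝 (dist Ws x)) :=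
      hconv.dist tendsto_const_nhds
    have l2 : Tendsto (fun k => (1+ε)*(f (φ k) - t)) atTop (𝓝 ((1+ε)*(ρs - t))) :=
      ((hfφ.sub_const t).const_mul _)
    exact le_of_tendsto_of_tendsto' l1 l2 (fun k => hW2 (φ k))
  -- main claim : ρs = m
  have hρsm : ρs = m := by
    by_contra hne
    have hlt : ρs < m := lt_of_le_of_ne hρsIcc.2 hne
    set z := Ws with hz
    have hz_tube : infDist z M < τ := by rw [hWs_d]; linarith
    obtain ⟨hpM, hpd⟩ := hπ z hz_tube
    set p := π z with hp
    have hzp : dist z p = ρs := by rw [hpd, hWs_d]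
    have hκ0 : (0:ℝ) < ε * t / 8 := by positivity
    set κ := ε * t / 8 with hκdef
    obtain ⟨δ, hδ0, hδτ, hδprop⟩ := reachAux_cont hMclosed hreach hπ hz_tube hκ0
    rw [hWs_d] at hδτ
    set ℓ := min δ (ε*t/2) with hℓdef
    have hℓ0 : 0 < ℓ := lt_min hδ0 (by positivity)
    have hℓδ : ℓ ≤ δ := min_le_left _ _
    have hℓε : ℓ ≤ ε*t/2 := min_le_right _ _
    set n := (ρs)⁻¹ • (z - p) with hn
    have hzpnorm : ‖z - p‖ = ρs := by rw [← dist_eq_norm]; exact hzp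
    have hnnorm : ‖n‖ = 1 := by
      rw [hn, norm_smul, hzpnorm, Real.norm_eq_abs, abs_inv,
        abs_of_pos hρ0, inv_mul_cancel₀ hρ0.ne']
    set Y : ℝ → EuclideanSpace ℝ (Fin d) := fun s => z + s • n with hY
    have hYz : ∀ s : ℝ, 0 ≤ s → dist (Y s) z = s := by
      intro s hs
      rw [hY]; simp only [dist_eq_norm, add_sub_cancel_left, norm_smul, hnnorm,
        Real.norm_eq_abs, mul_one, abs_of_nonneg hs]
    have hYtube : ∀ s ∈ Set.Icc (0:ℝ) ℓ, infDist (Y s) M < τ := by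
      intro s hs
      have h1 : infDist (Y s) M ≤ infDist z M + dist (Y s) z :=
        infDist_le_infDist_add_dist
      rw [hWs_d, hYz s hs.1] at h1
      have : s ≤ δ := le_trans hs.2 hℓδ
      linarith
    have hκρ : κ < ρs := by
      have h1 : t ≤ ρs := hρsIcc.1
      have h2 : ε*t ≤ 1*t := mul_le_mul_of_nonneg_right hε1 ht0.le
      rw [hκdef]; linarith
    have hlow : ∀ s ∈ Set.Icc (0:ℝ) ℓ,
        ρs^2 + 2*s*(ρs - κ) ≤ (infDist (Y s) M)^2 := by
      intro s hs
      obtain ⟨hqM, hqd⟩ := hπ (Y s) (hYtube s hs)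
      set q := π (Y s) with hq
      have h1 : infDist (Y s) M = ‖Y s - q‖ := by rw [← hqd, dist_eq_norm]
      have hsplit : Y s - q = (z - q) + s • n := by
        show z + s • n - q = z - q + s • n; exact add_sub_right_comm _ _ _
      have hexp : ‖Y s - q‖^2 = ‖z - q‖^2 + 2*(s*⟪z - q, n⟫) + s^2 := by
        rw [hsplit, norm_add_sq_real, real_inner_smul_right, norm_smul,
          Real.norm_eq_abs, hnnorm, mul_one, sq_abs]
      have h2 : ρs ≤ ‖z - q‖ := by
        rw [← hWs_d, ← dist_eq_norm]; exact infDist_le_dist_of_mem hqM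
      have hinner1 : ⟪z - p, n⟫ = ρs := by
        rw [hn, real_inner_smul_right, real_inner_self_eq_norm_sq, hzpnorm]
        field_simp
      have hpq : ‖p - q‖ ≤ κ := by
        have := hδprop (Y s) (by rw [hYz s hs.1]; exact le_trans hs.2 hℓδ)
        rw [← hq, ← hp] at this
        rw [← dist_eq_norm, dist_comm]
        exact this
      have hinner2 : ⟪z - q, n⟫ ≥ ρs - κ := by
        have hsplit2 : (z - q) = (z - p) + (p - q) := by abel
        have h4 : |⟪p - q, n⟫| ≤ ‖p - q‖ := by
          have := abs_real_inner_le_norm (p - q) n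
          rwa [hnnorm, mul_one] at this
        have h5 : ⟪p - q, n⟫ ≥ -κ := by
          have := neg_abs_le ⟪p - q, n⟫
          have h6 := le_trans h4 hpq
          linarith [this, h6]
        rw [hsplit2, inner_add_left, hinner1]
        linarith
      have hs0 : 0 ≤ s := hs.1
      have h7 : s * (ρs - κ) ≤ s * ⟪z - q, n⟫ :=
        mul_le_mul_of_nonneg_left hinner2 hs0
      have h8 : ρs^2 ≤ ‖z - q‖^2 := pow_le_pow_left₀ hρ0.le h2 2
      rw [h1, hexp]; linarith [h7, h8, sq_nonneg s]
    -- push past ρs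
    set ρ'' := infDist (Y ℓ) M with hρ''
    have hρ''_gt : ρs < ρ'' := by
      have h1 := hlow ℓ ⟨hℓ0.le, le_refl ℓ⟩
      have h2 : ρs^2 < ρ''^2 := by nlinarith [mul_pos hℓ0 (sub_pos.mpr hκρ)]
      exact lt_of_pow_lt_pow_left₀ 2 infDist_nonneg h2
    set ρ' := min m ρ'' with hρ'
    have hρ'_gt : ρs < ρ' := lt_min hlt hρ''_gt
    -- IVT
    have hYcont : Continuous Y := by
      rw [hY]; exact continuous_const.add (continuous_id.smul continuous_const)
    have hgcont : ContinuousOn (fun s => infDist (Y s) M) (Set.Icc 0 ℓ) :=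
      ((continuous_infDist_pt M).comp hYcont).continuousOn
    have hg0 : infDist (Y 0) M = ρs := by
      have : Y 0 = z := by rw [hY]; simp
      rw [this, hWs_d]
    have hmem : ρ' ∈ Set.Icc (infDist (Y 0) M) (infDist (Y ℓ) M) := by
      rw [hg0]
      exact ⟨hρ'_gt.le, min_le_right _ _⟩
    obtain ⟨sst, hsst_mem, hgsst0⟩ := intermediate_value_Icc hℓ0.le hgcont hmem
    have hgsst : infDist (Y sst) M = ρ' := hgsst0
    -- chain bound
    have hlow' := hlow sst hsst_mem
    rw [hgsst] at hlow'
    have hρ'le : ρ' ≤ ρs + sst := by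
      have h1 : infDist (Y sst) M ≤ infDist z M + dist (Y sst) z :=
        infDist_le_infDist_add_dist
      rw [hgsst, hWs_d, hYz sst hsst_mem.1] at h1
      exact h1
    have hfact : 2*κ + ℓ ≤ ε*ρs := by
      have h1 : t ≤ ρs := hρsIcc.1
      have h2 : ε*t ≤ ε*ρs := mul_le_mul_of_nonneg_left h1 hε.le
      rw [hκdef]; linarith
    have hΔ0 : 0 ≤ ρ' - ρs := by linarith
    have hΔs : ρ' - ρs ≤ sst := by linarith
    have hcoef : 0 < 2*ρs - 2*κ - (ρ' - ρs) := by
      have h1 : ρ' - ρs ≤ ℓ := le_trans hΔs hsst_mem.2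
      have h2 : ε*ρs ≤ 1*ρs := mul_le_mul_of_nonneg_right hε1 hρ0.le
      linarith [hfact]
    have hkey : sst ≤ (1+ε)*(ρ' - ρs) := by
      have h1 : sst * (2*ρs - 2*κ - (ρ' - ρs)) ≤ 2*ρs*(ρ' - ρs) := by
        nlinarith [hlow', mul_nonneg (sub_nonneg.mpr hΔs) hΔ0]
      have h2 : 2*ρs ≤ (1+ε)*(2*ρs - 2*κ - (ρ' - ρs)) := by
        have h3 : ρ' - ρs ≤ ℓ := le_trans hΔs hsst_mem.2
        have h23 : (1+ε)*(2*κ+(ρ' - ρs)) ≤ 2*(2*κ+ℓ) := by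
          apply mul_le_mul (by linarith) (by linarith) (by linarith [hκ0.le]) (by norm_num)
        nlinarith [h23, hfact]
      have h4 : 2*ρs*(ρ' - ρs) ≤ ((1+ε)*(ρ' - ρs))*(2*ρs - 2*κ - (ρ' - ρs)) := by
        calc 2*ρs*(ρ' - ρs) ≤ ((1+ε)*(2*ρs - 2*κ - (ρ' - ρs)))*(ρ' - ρs) :=
              mul_le_mul_of_nonneg_right h2 hΔ0
          _ = ((1+ε)*(ρ' - ρs))*(2*ρs - 2*κ - (ρ' - ρs)) := by ring
      exact le_of_mul_le_mul_right (le_trans h1 h4) hcoef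
    -- ρ' ∈ A : contradiction
    have hρ'A : ρ' ∈ A := by
      refine ⟨⟨le_trans hρsIcc.1 (by linarith), min_le_left _ _⟩, Y sst, hgsst, ?_⟩
      calc dist (Y sst) x ≤ dist (Y sst) z + dist z x := dist_triangle _ _ _
        _ ≤ sst + (1+ε)*(ρs - t) := by
            rw [hYz sst hsst_mem.1]; exact add_le_add_right hWs_dist _
        _ ≤ (1+ε)*(ρ' - ρs) + (1+ε)*(ρs - t) := add_le_add_left hkey _
        _ = (1+ε)*(ρ' - t) := by ring
    have := le_csSup hbdd hρ'A
    rw [← hρs] at this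
    linarith
  exact ⟨Ws, by rw [hWs_d, hρsm], by rw [← hρsm]; exact hWs_dist⟩

lemma reachAux_escape (hMclosed : IsClosed M)
    (hreach : ∀ x : EuclideanSpace ℝ (Fin d), infDist x M < τ →
      ∃! z : EuclideanSpace ℝ (Fin d), z ∈ M ∧ dist x z = infDist x M)
    (hπ : ∀ x : EuclideanSpace ℝ (Fin d), infDist x M < τ →
      π x ∈ M ∧ dist x (π x) = infDist x M)
    {x : EuclideanSpace ℝ (Fin d)} {m : ℝ}
    (ht0 : 0 < infDist x M) (hm1 : infDist x M < m) (hmτ : m < τ) :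
    ∃ W, infDist W M = m ∧ dist W x ≤ m - infDist x M := by
  set t := infDist x M with ht
  have h1 : ∀ k : ℕ, ∃ W, infDist W M = m ∧ dist W x ≤ (1+1/((k:ℝ)+1)) * (m - t) := by
    intro k
    refine reachAux_escape_eps hMclosed hreach hπ ht0 hm1 hmτ (by positivity) ?_
    rw [div_le_one (by positivity)]
    linarith [(Nat.cast_nonneg k : (0:ℝ) ≤ (k:ℝ))]
  choose W hW1 hW2 using h1
  have hmt : (0:ℝ) ≤ m - t := by linarith
  have hWball : ∀ k, W k ∈ closedBall x (2*(m - t)) := by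
    intro k; rw [mem_closedBall]
    refine le_trans (hW2 k) ?_
    have h2 : (1:ℝ)/((k:ℝ)+1) ≤ 1 := by
      rw [div_le_one (by positivity)]
      linarith [(Nat.cast_nonneg k : (0:ℝ) ≤ (k:ℝ))]
    nlinarith
  obtain ⟨Ws, -, φ, hφ, hconv⟩ := (isCompact_closedBall _ _).tendsto_subseq hWball
  refine ⟨Ws, ?_, ?_⟩
  · have l1 : Tendsto (fun k => infDist (W (φ k)) M) atTop (𝓝 (infDist Ws M)) :=
      ((continuous_infDist_pt M).tendsto Ws).comp hconv
    have heq : (fun k => infDist (W (φ k)) M) = fun _ => m := by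
      funext k; exact hW1 (φ k)
    rw [heq] at l1
    exact tendsto_nhds_unique l1 tendsto_const_nhds
  · have l1 : Tendsto (fun k => dist (W (φ k)) x) atTop (𝓝 (dist Ws x)) :=
      hconv.dist tendsto_const_nhds
    have l0 : Tendsto (fun k => (1:ℝ)/((φ k : ℝ)+1)) atTop (𝓝 0) :=
      tendsto_one_div_add_atTop_nhds_zero_nat.comp hφ.tendsto_atTop
    have l2 : Tendsto (fun k => (1+1/((φ k : ℝ)+1)) * (m - t)) atTop (𝓝 ((1+0) * (m - t))) :=
      ((l0.const_add 1).mul_const _)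
    rw [show ((1:ℝ)+0) * (m - t) = m - t by ring] at l2
    exact le_of_tendsto_of_tendsto' l1 l2 (fun k => hW2 (φ k))

lemma reachAux_key (hMclosed : IsClosed M)
    (hreach : ∀ x : EuclideanSpace ℝ (Fin d), infDist x M < τ →
      ∃! z : EuclideanSpace ℝ (Fin d), z ∈ M ∧ dist x z = infDist x M)
    (hπ : ∀ x : EuclideanSpace ℝ (Fin d), infDist x M < τ →
      π x ∈ M ∧ dist x (π x) = infDist x M)
    {x : EuclideanSpace ℝ (Fin d)} {m : ℝ}
    (ht0 : 0 < infDist x M) (hm1 : infDist x M < m) (hmτ : m < τ)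
    {e : EuclideanSpace ℝ (Fin d)} (he : e ∈ M) :
    ⟪x - π x, e - π x⟫ ≤ infDist x M * ‖e - π x‖^2 / (2*m) := by
  set t := infDist x M with ht
  have htτ : t < τ := hm1.trans hmτ
  obtain ⟨haM, had⟩ := hπ x htτ
  set a := π x with ha
  have hm0 : 0 < m := lt_trans ht0 hm1
  obtain ⟨Wp, hW1, hW2⟩ := reachAux_escape hMclosed hreach hπ ht0 hm1 hmτ
  have hxa : dist x a = t := had
  have h1 : dist Wp a ≤ m := by
    calc dist Wp a ≤ dist Wp x + dist x a := dist_triangle _ _ _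
      _ ≤ (m - t) + t := by rw [hxa]; exact add_le_add_left hW2 _
      _ = m := by ring
  have h2 : m ≤ dist Wp a := by rw [← hW1]; exact infDist_le_dist_of_mem haM
  have hWa : dist Wp a = m := le_antisymm h1 h2
  have hWx : dist Wp x = m - t := by
    have h3 : dist Wp a ≤ dist Wp x + dist x a := dist_triangle _ _ _
    rw [hWa, hxa] at h3
    exact le_antisymm hW2 (by linarith)
  have e2 : ‖Wp - a‖ = m := by rw [← dist_eq_norm]; exact hWa
  have e3 : ‖Wp - x‖ = m - t := by rw [← dist_eq_norm]; exact hWx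
  have e4 : ‖x - a‖ = t := by rw [← dist_eq_norm]; exact hxa
  -- Cauchy–Schwarz equality case
  have hCS : ⟪Wp - x, x - a⟫ = ‖Wp - x‖ * ‖x - a‖ := by
    have e1 : ‖Wp - a‖^2 = ‖Wp - x‖^2 + 2*⟪Wp - x, x - a⟫ + ‖x - a‖^2 := by
      have hsplit : Wp - a = (Wp - x) + (x - a) := by abel
      rw [hsplit, norm_add_sq_real]
    rw [e2, e3, e4] at e1
    rw [e3, e4]
    nlinarith [e1]
  have hsm : ‖x - a‖ • (Wp - x) = ‖Wp - x‖ • (x - a) :=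
    (inner_eq_norm_mul_iff_real).mp hCS
  have hvec : t • (Wp - a) = m • (x - a) := by
    have h5 : t • (Wp - x) = (m - t) • (x - a) := by
      have h5' := hsm
      rw [e4, e3] at h5'
      exact h5'
    have h6 : t • (Wp - a) = t • (Wp - x) + t • (x - a) := by
      rw [← smul_add]; congr 1; abel
    rw [h6, h5, ← add_smul]
    congr 1; ring
  have h7 : m ≤ ‖Wp - e‖ := by
    rw [← dist_eq_norm, ← hW1]; exact infDist_le_dist_of_mem he
  have h8 : ‖Wp - e‖^2 = ‖Wp - a‖^2 - 2*⟪Wp - a, e - a⟫ + ‖e - a‖^2 := by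
    have hsplit : Wp - e = (Wp - a) - (e - a) := by abel
    rw [hsplit, norm_sub_sq_real]
  have h9 : 2*⟪Wp - a, e - a⟫ ≤ ‖e - a‖^2 := by
    rw [e2] at h8
    nlinarith [h7, h8, hm0]
  have h10 : t * ⟪Wp - a, e - a⟫ = m * ⟪x - a, e - a⟫ := by
    rw [← real_inner_smul_left, ← real_inner_smul_left, hvec]
  rw [le_div_iff₀ (by positivity)]
  nlinarith [mul_le_mul_of_nonneg_left h9 ht0.le, h10]

end Aux

/-- **Lipschitz continuity of the nearest-point projection onto a set of positive reach.**
Let `M ⊂ ℝ^d` be a closed set with reach at least `τ > 0`, i.e., every point within distance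
`τ` of `M` has a unique nearest point in `M`, and let `π` be the nearest-point projection.
Then for every `0 < r < τ`, the restriction of `π` to the tube
`B(r, M) = {x : dist(x, M) ≤ r}` is Lipschitz with constant `1/(1 − r/τ)`. -/
theorem reach_projection_lipschitz (d : ℕ)
    (M : Set (EuclideanSpace ℝ (Fin d))) (hMclosed : IsClosed M) (hMne : M.Nonempty)
    (τ : ℝ) (hτ : 0 < τ)
    (hreach : ∀ x : EuclideanSpace ℝ (Fin d), infDist x M < τ →
      ∃! z : EuclideanSpace ℝ (Fin d), z ∈ M ∧ dist x z = infDist x M)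
    (π : EuclideanSpace ℝ (Fin d) → EuclideanSpace ℝ (Fin d))
    (hπ : ∀ x : EuclideanSpace ℝ (Fin d), infDist x M < τ →
      π x ∈ M ∧ dist x (π x) = infDist x M)
    (r : ℝ) (hr0 : 0 < r) (hrτ : r < τ) :
    ∀ x y : EuclideanSpace ℝ (Fin d), infDist x M ≤ r → infDist y M ≤ r →
      dist (π x) (π y) ≤ (1 / (1 - r / τ)) * dist x y := by
  intro x y hxr hyr
  have hxτ : infDist x M < τ := lt_of_le_of_lt hxr hrτ
  have hyτ : infDist y M < τ := lt_of_le_of_lt hyr hrτ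
  obtain ⟨haM, had⟩ := hπ x hxτ
  obtain ⟨hbM, hbd⟩ := hπ y hyτ
  set a := π x with ha
  set b := π y with hb
  have hrτ' : r/τ < 1 := (div_lt_one hτ).mpr hrτ
  have hcoef : 0 < 1 - r/τ := by linarith
  rcases eq_or_ne a b with hab | hab
  · rw [hab, dist_self]; positivity
  -- one-sided key inequality, valid also when the point is on M
  have hside : ∀ (u : EuclideanSpace ℝ (Fin d)), infDist u M ≤ r → ∀ e ∈ M,
      ∀ m : ℝ, r < m → m < τ → ⟪u - π u, e - π u⟫ ≤ r * ‖e - π u‖^2 / (2*m) := by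
    intro u hu e heM m hm1 hm2
    have hm0 : 0 < m := lt_trans hr0 hm1
    rcases (infDist_nonneg : 0 ≤ infDist u M).eq_or_lt with h0 | h0
    · -- u ∈ M, so π u = u
      have huτ : infDist u M < τ := lt_of_le_of_lt hu hrτ
      obtain ⟨hpuM, hpud⟩ := hπ u huτ
      have : dist u (π u) = 0 := by rw [hpud, ← h0]
      have huu : π u = u := (dist_eq_zero.mp this).symm
      rw [huu, sub_self]
      rw [inner_zero_left]
      positivity
    · have hk := reachAux_key hMclosed hreach hπ h0 (lt_of_le_of_lt hu hm1) hm2 heM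
      refine le_trans hk ?_
      have h1 : infDist u M * ‖e - π u‖^2 ≤ r * ‖e - π u‖^2 :=
        mul_le_mul_of_nonneg_right (le_trans (le_of_eq rfl) hu) (by positivity)
      exact div_le_div_of_nonneg_right h1 (by positivity) |>.trans (le_of_eq rfl) |>.trans (le_of_eq rfl)
  -- combination for每 m
  have hcomb : ∀ m : ℝ, r < m → m < τ → (1 - r/m) * ‖b - a‖ ≤ ‖x - y‖ := by
    intro m hm1 hm2
    have hm0 : 0 < m := lt_trans hr0 hm1
    have h1 := hside x hxr b hbM m hm1 hm2
    have h2 := hside y hyr a haM m hm1 hm2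
    rw [← ha] at h1
    rw [← hb] at h2
    have hid : ⟪x - a, b - a⟫ + ⟪y - b, a - b⟫ = ⟪x - y, b - a⟫ + ‖b - a‖^2 := by
      have hsplit : x - a = (x - y) + (y - b) + (b - a) := by abel
      have hsplit2 : a - b = -(b - a) := by abel
      rw [hsplit, hsplit2, inner_add_left, inner_add_left, inner_neg_right,
        real_inner_self_eq_norm_sq]
      ring
    have h3 : -(‖x - y‖ * ‖b - a‖) ≤ ⟪x - y, b - a⟫ := by
      have h4 := real_inner_le_norm (x - y) (a - b)
      have h5 : ⟪x - y, a - b⟫ = -⟪x - y, b - a⟫ := by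
        rw [show a - b = -(b - a) by abel, inner_neg_right]
      rw [h5] at h4
      have h6 : ‖a - b‖ = ‖b - a‖ := norm_sub_rev a b
      rw [h6] at h4
      linarith
    have hnorm : ‖a - b‖ = ‖b - a‖ := norm_sub_rev a b
    rw [hnorm] at h2
    have h4 : ‖b - a‖^2 + ⟪x - y, b - a⟫ ≤ r * ‖b - a‖^2 / m := by
      have h5 := add_le_add h1 h2
      rw [hid] at h5
      have h6 : r * ‖b - a‖^2 / (2*m) + r * ‖b - a‖^2 / (2*m) = r * ‖b - a‖^2 / m := by
        field_simp; ring
      linarith [h5, h6.le, h6.ge]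
    have hc0 : 0 < ‖b - a‖ := by
      rw [norm_pos_iff, sub_ne_zero]
      exact fun h => hab h.symm
    -- multiply through by m and divide by ‖b−a‖
    rw [show (1 - r/m) = (m - r)/m by field_simp, div_mul_eq_mul_div, div_le_iff₀ hm0]
    have h4m : (‖b - a‖^2 + ⟪x - y, b - a⟫) * m ≤ r * ‖b - a‖^2 := by
      have := mul_le_mul_of_nonneg_right h4 hm0.le
      rwa [div_mul_cancel₀ _ hm0.ne'] at this
    nlinarith [mul_le_mul_of_nonneg_right h3 hm0.le, h4m, hc0]
  -- let m → τ
  have hfinal : (1 - r/τ) * ‖b - a‖ ≤ ‖x - y‖ := by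
    by_contra hcon
    push_neg at hcon
    have hc0 : 0 < ‖b - a‖ := by
      rw [norm_pos_iff, sub_ne_zero]
      exact fun h => hab h.symm
    set q := ‖x - y‖ / ‖b - a‖ with hq
    have hq0 : 0 ≤ q := by positivity
    have hqlt : q < 1 - r/τ := (div_lt_iff₀ hc0).mpr (by linarith [hcon])
    set q' := (q + (1 - r/τ))/2 with hq'
    have hq'0 : 0 < q' := by rw [hq']; linarith
    have hq'lt : q' < 1 - r/τ := by rw [hq']; linarith
    have hqq' : q < q' := by rw [hq']; linarith
    have h1q' : 0 < 1 - q' := by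
      have : r/τ > 0 := by positivity
      linarith
    set m := r / (1 - q') with hm
    have hm1 : r < m := by
      rw [hm, lt_div_iff₀ h1q']
      nlinarith
    have hm2 : m < τ := by
      rw [hm, div_lt_iff₀ h1q']
      have h7 : r/τ < 1 - q' := by linarith
      calc r = (r/τ) * τ := by field_simp
        _ < (1 - q') * τ := by
            apply mul_lt_mul_of_pos_right h7 hτ
        _ = τ * (1 - q') := by ring
    have hco := hcomb m hm1 hm2
    have h1rm : 1 - r/m = q' := by
      rw [hm]
      field_simp
      ring
    rw [h1rm] at hco
    have hxyq : ‖x - y‖ = q * ‖b - a‖ := by rw [hq]; field_simp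
    nlinarith [hco, hxyq, hqq', hc0]
  have hgoal : ‖a - b‖ ≤ (1/(1 - r/τ)) * ‖x - y‖ := by
    rw [norm_sub_rev]
    rw [div_mul_eq_mul_div, one_mul, le_div_iff₀ hcoef]
    linarith [hfinal]
  calc dist (π x) (π y) = ‖a - b‖ := by rw [← ha, ← hb, dist_eq_norm]
    _ ≤ (1/(1 - r/τ)) * ‖x - y‖ := hgoal
    _ = (1/(1 - r/τ)) * dist x y := by rw [dist_eq_norm]
end

section
/- Let d' ≤ d, let A : ℝ^{d'} → ℝ^{d'×d} (linear maps from ℝ^d to ℝ^{d'}) be continuously differentiable with sup_y ‖A(y)‖ ≤ c_1 < 1 and sup_y ‖DA(y)‖ ≤ c_0, and let r > 0 with c_0 r < 1. Then for every u ∈ ℝ^d with |u| ≤ r, the map F_u : ℝ^{d'} → ℝ^{d'}, F_u(y) = y + A(y)u, is a C¹ diffeomorphism of ℝ^{d'}; its inverse S_u satisfies S_u(z) = z − A(S_u(z))u for all z, its derivative satisfies sup_z ‖DS_u(z)‖ ≤ 1/(1 − c_0 r), and there is a constant c depending only on d', c_0 and r such that sup_z | |det(DS_u(z))| − 1 | ≤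 c |u|. -/
open Set Filter Metric

lemma contDiff_clm_det (n : ℕ) :
    ContDiff ℝ 1 (fun T : EuclideanSpace ℝ (Fin n) →L[ℝ] EuclideanSpace ℝ (Fin n) =>
      LinearMap.det (T.toLinearMap)) := by
  classical
  set E := EuclideanSpace ℝ (Fin n)
  let b : Module.Basis (Fin n) ℝ E := (EuclideanSpace.basisFun (Fin n) ℝ).toBasis
  have hrep : (fun T : E →L[ℝ] E => LinearMap.det (T.toLinearMap)) =
      fun T => ∑ σ : Equiv.Perm (Fin n), ((Equiv.Perm.sign σ : ℤ) : ℝ) *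
        ∏ i, (LinearMap.toContinuousLinearMap (b.coord (σ i)))
          ((ContinuousLinearMap.apply ℝ E (b i)) T) := by
    funext T
    rw [← LinearMap.det_toMatrix b, Matrix.det_apply']
    simp [LinearMap.toMatrix_apply, Module.Basis.coord_apply]
  rw [hrep]
  apply ContDiff.sum
  intro σ _
  apply ContDiff.mul contDiff_const
  apply contDiff_prod
  intro i _
  exact (LinearMap.toContinuousLinearMap (b.coord (σ i))).contDiff.comp
    (ContinuousLinearMap.apply ℝ E (b i)).contDiff

lemma exists_lip_on_ball {G : Type*} [NormedAddCommGroup G] [NormedSpace ℝ G]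
    [FiniteDimensional ℝ G] {φ : G → ℝ} (hφ : ContDiff ℝ 1 φ) (R : ℝ) :
    ∃ L : ℝ, 0 ≤ L ∧ ∀ x ∈ closedBall (0 : G) R, ∀ y ∈ closedBall (0 : G) R,
      |φ x - φ y| ≤ L * ‖x - y‖ := by
  obtain ⟨C, hC⟩ := (isCompact_closedBall (0 : G) R).exists_bound_of_continuousOn
    ((hφ.continuous_fderiv one_ne_zero).continuousOn)
  refine ⟨max C 0, le_max_right _ _, ?_⟩
  intro x hx y hy
  have := (convex_closedBall (0 : G) R).norm_image_sub_le_of_norm_fderiv_le (C := max C 0)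
    (fun w _ => (hφ.differentiable one_ne_zero).differentiableAt)
    (fun w hw => le_trans (hC w hw) (le_max_left C 0)) hy hx
  simpa [Real.norm_eq_abs] using this


lemma one_add_clm_equiv {E : Type*} [NormedAddCommGroup E] [NormedSpace ℝ E] [CompleteSpace E]
    (B : E →L[ℝ] E) (hB : ‖B‖ < 1) :
    ∃ e : E ≃L[ℝ] E, (e : E →L[ℝ] E) = 1 + B ∧
      ‖(e.symm : E →L[ℝ] E)‖ * (1 - ‖B‖) ≤ 1 ∧
      ‖(e.symm : E →L[ℝ] E) - 1‖ ≤ ‖(e.symm : E →L[ℝ] E)‖ * ‖B‖ := by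
  have hBneg : ‖-B‖ < 1 := by rwa [norm_neg]
  set w := Units.oneSub (-B) hBneg with hw
  have hwv : (w : E →L[ℝ] E) = 1 + B := sub_neg_eq_add 1 B
  set e : E ≃L[ℝ] E := ContinuousLinearEquiv.equivOfInverse (↑w) (↑w⁻¹)
    (fun x => by
      calc (↑w⁻¹ : E →L[ℝ] E) ((w : E →L[ℝ] E) x) = ((↑w⁻¹ * ↑w : E →L[ℝ] E)) x := rfl
        _ = x := by rw [w.inv_mul]; rfl)
    (fun x => by
      calc (w : E →L[ℝ] E) ((↑w⁻¹ : E →L[ℝ] E) x) = ((↑w * ↑w⁻¹ : E →L[ℝ] E)) x := rfl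
        _ = x := by rw [w.mul_inv]; rfl) with he
  have hecoe : (e : E →L[ℝ] E) = ↑w := by ext x; rfl
  have hesymm : (e.symm : E →L[ℝ] E) = ↑w⁻¹ := by ext x; rfl
  set V : E →L[ℝ] E := ↑w⁻¹ with hV
  have hVmul : V * (1 + B) = 1 := by rw [← hwv]; exact w.inv_mul
  have hVeq : V = 1 - V * B := by
    have h6 : V * 1 + V * B = 1 := by rw [← mul_add]; exact hVmul
    rw [mul_one] at h6
    rw [← h6]; abel
  have hone : ‖(1 : E →L[ℝ] E)‖ ≤ 1 := by
    rw [ContinuousLinearMap.one_def]; exact ContinuousLinearMap.norm_id_le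
  have hVB : ‖V * B‖ ≤ ‖V‖ * ‖B‖ := norm_mul_le V B
  have hVle : ‖V‖ ≤ 1 + ‖V‖ * ‖B‖ := by
    calc ‖V‖ = ‖1 - V * B‖ := by rw [← hVeq]
      _ ≤ ‖(1 : E →L[ℝ] E)‖ + ‖V * B‖ := norm_sub_le _ _
      _ ≤ 1 + ‖V‖ * ‖B‖ := add_le_add hone hVB
  refine ⟨e, by rw [hecoe, hwv], ?_, ?_⟩
  · rw [hesymm]; nlinarith [norm_nonneg V]
  · rw [hesymm]
    have h7 : V - 1 = -(V * B) := by nth_rewrite 1 [hVeq]; abel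
    rw [h7, norm_neg]
    exact hVB


set_option maxHeartbeats 1000000 in
/-- **Perturbations of the identity along a matrix field are diffeomorphisms.**
Let `d' ≤ d` and let `A : ℝ^{d'} → L(ℝ^d, ℝ^{d'})` be continuously differentiable with
`sup_y ‖A(y)‖ ≤ c₁ < 1` and `sup_y ‖DA(y)‖ ≤ c₀`, and let `r > 0` with `c₀ r < 1`. Then there
is a constant `c > 0` (depending only on `d'`, `c₀` and `r`) such that for every `u ∈ ℝ^d`
with `|u| ≤ r`, the map `F_u(y) = y + A(y)u` is a C¹ diffeomorphism of `ℝ^{d'}`; its inverse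
`S_u` satisfies `S_u(z) = z − A(S_u(z))u`, `sup_z ‖DS_u(z)‖ ≤ 1/(1 − c₀ r)`, and
`sup_z | |det DS_u(z)| − 1 | ≤ c|u|`. -/
theorem perturbed_identity_diffeomorphism (d d' : ℕ) (hdd : d' ≤ d)
    (A : EuclideanSpace ℝ (Fin d') →
      (EuclideanSpace ℝ (Fin d) →L[ℝ] EuclideanSpace ℝ (Fin d')))
    (hA : ContDiff ℝ 1 A)
    (c₀ c₁ : ℝ) (hc₁ : c₁ < 1) (hAbound : ∀ y, ‖A y‖ ≤ c₁)
    (hDAbound : ∀ y, ‖fderiv ℝ A y‖ ≤ c₀)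
    (r : ℝ) (hr : 0 < r) (hc₀r : c₀ * r < 1) :
    ∃ c : ℝ, 0 < c ∧
      ∀ u : EuclideanSpace ℝ (Fin d), ‖u‖ ≤ r →
        ContDiff ℝ 1 (fun y => y + A y u) ∧
        ∃ S : EuclideanSpace ℝ (Fin d') → EuclideanSpace ℝ (Fin d'),
          ContDiff ℝ 1 S ∧
          Function.LeftInverse S (fun y => y + A y u) ∧
          Function.RightInverse S (fun y => y + A y u) ∧
          (∀ z, S z = z - A (S z) u) ∧
          (∀ z, ‖fderiv ℝ S z‖ ≤ 1 / (1 - c₀ * r)) ∧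
          (∀ z, abs (|LinearMap.det ((fderiv ℝ S z).toLinearMap)| - 1) ≤ c * ‖u‖) := by
  set k := c₀ * r with hkdef
  have hc₀ : 0 ≤ c₀ := le_trans (norm_nonneg (fderiv ℝ A 0)) (hDAbound 0)
  have hk0 : 0 ≤ k := by positivity
  have h1k : 0 < 1 - k := by linarith
  obtain ⟨L, hL0, hLip⟩ := exists_lip_on_ball (contDiff_clm_det d') (1 / (1 - k) + 1)
  refine ⟨L * (c₀ / (1 - k)) + 1, by positivity, ?_⟩
  intro u hu
  set g : EuclideanSpace ℝ (Fin d') → EuclideanSpace ℝ (Fin d') := fun y => A y u with hgdef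
  have hg : ContDiff ℝ 1 g :=
    (ContinuousLinearMap.apply ℝ (EuclideanSpace ℝ (Fin d')) u).contDiff.comp hA
  have hF : ContDiff ℝ 1 (fun y : EuclideanSpace ℝ (Fin d') => y + A y u) :=
    contDiff_id.add hg
  set B : EuclideanSpace ℝ (Fin d') →
      (EuclideanSpace ℝ (Fin d') →L[ℝ] EuclideanSpace ℝ (Fin d')) :=
    fun y => ((ContinuousLinearMap.apply ℝ (EuclideanSpace ℝ (Fin d')) u).comp (fderiv ℝ A y))
    with hBdef
  have hgd : ∀ y, HasFDerivAt g (B y) y := fun y =>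
    ((ContinuousLinearMap.apply ℝ (EuclideanSpace ℝ (Fin d')) u).hasFDerivAt).comp y
      ((hA.differentiable one_ne_zero y).hasFDerivAt)
  have happly : ‖ContinuousLinearMap.apply ℝ (EuclideanSpace ℝ (Fin d')) u‖ ≤ ‖u‖ := by
    refine ContinuousLinearMap.opNorm_le_bound _ (norm_nonneg u) fun T => ?_
    rw [mul_comm]
    exact T.le_opNorm u
  have hBnorm : ∀ y, ‖B y‖ ≤ c₀ * ‖u‖ := by
    intro y
    calc ‖B y‖ ≤ ‖ContinuousLinearMap.apply ℝ (EuclideanSpace ℝ (Fin d')) u‖ *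
          ‖fderiv ℝ A y‖ := ContinuousLinearMap.opNorm_comp_le _ _
      _ ≤ ‖u‖ * c₀ := mul_le_mul happly (hDAbound y) (norm_nonneg (fderiv ℝ A y)) (norm_nonneg _)
      _ = c₀ * ‖u‖ := mul_comm _ _
  have hku : c₀ * ‖u‖ ≤ k := by
    rw [hkdef]
    exact mul_le_mul_of_nonneg_left hu hc₀
  have hku1 : c₀ * ‖u‖ < 1 := lt_of_le_of_lt hku hc₀r
  have hku0 : 0 ≤ c₀ * ‖u‖ := by positivity
  have hgfd : ∀ y, fderiv ℝ g y = B y := fun y => (hgd y).fderiv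
  have hglipR : ∀ x y : EuclideanSpace ℝ (Fin d'), ‖g x - g y‖ ≤ (c₀ * ‖u‖) * ‖x - y‖ := by
    intro x y
    exact convex_univ.norm_image_sub_le_of_norm_fderiv_le
      (fun w _ => (hg.differentiable one_ne_zero).differentiableAt)
      (fun w _ => by rw [hgfd w]; exact hBnorm w) trivial trivial
  have hcontr : ∀ z : EuclideanSpace ℝ (Fin d'),
      ContractingWith (Real.toNNReal (c₀ * ‖u‖)) (fun y => z - g y) := by
    intro z
    constructor
    · exact_mod_cast Real.toNNReal_lt_one.mpr hku1
    · apply LipschitzWith.of_dist_le_mul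
      intro x y
      rw [dist_sub_left, dist_eq_norm, dist_eq_norm, Real.coe_toNNReal _ hku0]
      exact hglipR x y
  set S : EuclideanSpace ℝ (Fin d') → EuclideanSpace ℝ (Fin d') :=
    fun z => ContractingWith.fixedPoint (fun y => z - g y) (hcontr z) with hSdef
  have hSfix : ∀ z, S z = z - g (S z) := fun z =>
    ((hcontr z).fixedPoint_isFixedPt).symm
  have hFS : ∀ z, (fun y : EuclideanSpace ℝ (Fin d') => y + A y u) (S z) = z := by
    intro z
    show S z + g (S z) = z
    nth_rewrite 1 [hSfix z]
    abel
  have hinj : Function.Injective (fun y : EuclideanSpace ℝ (Fin d') => y + A y u) := by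
    intro x y hxy
    have h2 : x - y = g y - g x := by
      have h1 : x + g x = y + g y := hxy
      exact sub_eq_sub_iff_add_eq_add.mpr (h1.trans (add_comm y (g y)))
    have h3 : ‖x - y‖ ≤ (c₀ * ‖u‖) * ‖x - y‖ := by
      calc ‖x - y‖ = ‖g y - g x‖ := by rw [h2]
        _ ≤ (c₀ * ‖u‖) * ‖y - x‖ := hglipR y x
        _ = (c₀ * ‖u‖) * ‖x - y‖ := by rw [norm_sub_rev]
    have h4 : ‖x - y‖ ≤ 0 := by nlinarith [norm_nonneg (x - y)]
    have h5 := le_antisymm h4 (norm_nonneg _)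
    rwa [norm_eq_zero, sub_eq_zero] at h5
  have hleft : Function.LeftInverse S (fun y : EuclideanSpace ℝ (Fin d') => y + A y u) :=
    fun y => hinj (hFS _)
  have main : ∀ z : EuclideanSpace ℝ (Fin d'), ContDiffAt ℝ 1 S z ∧
      ‖fderiv ℝ S z‖ ≤ 1 / (1 - k) ∧
      ‖fderiv ℝ S z - 1‖ ≤ (1 / (1 - k)) * (c₀ * ‖u‖) := by
    intro z
    set y := S z with hydef
    have hBy : ‖B y‖ < 1 := lt_of_le_of_lt (hBnorm y) hku1
    obtain ⟨e, hecoe, hbd1, hbd2⟩ := one_add_clm_equiv (B y) hBy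
    have hfd : HasFDerivAt (fun y : EuclideanSpace ℝ (Fin d') => y + A y u)
        ((e : EuclideanSpace ℝ (Fin d') →L[ℝ] EuclideanSpace ℝ (Fin d'))) y := by
      rw [hecoe]
      have := (hasFDerivAt_id y).add (hgd y)
      rw [ContinuousLinearMap.one_def]; exact this
    have hFs : HasStrictFDerivAt (fun y : EuclideanSpace ℝ (Fin d') => y + A y u)
        ((e : EuclideanSpace ℝ (Fin d') →L[ℝ] EuclideanSpace ℝ (Fin d'))) y :=
      hF.contDiffAt.hasStrictFDerivAt' hfd one_ne_zero
    have hS' : HasStrictFDerivAt S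
        ((e.symm : EuclideanSpace ℝ (Fin d') →L[ℝ] EuclideanSpace ℝ (Fin d')))
        ((fun y : EuclideanSpace ℝ (Fin d') => y + A y u) y) :=
      hFs.to_local_left_inverse (Filter.Eventually.of_forall hleft)
    rw [hFS z] at hS'
    have hfdS : fderiv ℝ S z =
        (e.symm : EuclideanSpace ℝ (Fin d') →L[ℝ] EuclideanSpace ℝ (Fin d')) :=
      hS'.hasFDerivAt.fderiv
    have hCD : ContDiffAt ℝ 1 S z := by
      have hli := hF.contDiffAt.to_localInverse (f' := e) hfd one_ne_zero
      have hunique := (hF.contDiffAt.hasStrictFDerivAt' hfd one_ne_zero).localInverse_unique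
        (Filter.Eventually.of_forall hleft)
      have hCD' : ContDiffAt ℝ 1 S ((fun y : EuclideanSpace ℝ (Fin d') => y + A y u) y) :=
        hli.congr_of_eventuallyEq hunique
      rwa [hFS z] at hCD'
    have hVbound : ‖(e.symm : EuclideanSpace ℝ (Fin d') →L[ℝ] EuclideanSpace ℝ (Fin d'))‖ ≤
        1 / (1 - k) := by
      rw [le_div_iff₀ h1k]
      have hBk : ‖B y‖ ≤ k := le_trans (hBnorm y) hku
      calc ‖(e.symm : EuclideanSpace ℝ (Fin d') →L[ℝ] EuclideanSpace ℝ (Fin d'))‖ * (1 - k)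
          ≤ ‖(e.symm : EuclideanSpace ℝ (Fin d') →L[ℝ] EuclideanSpace ℝ (Fin d'))‖ *
            (1 - ‖B y‖) :=
            mul_le_mul_of_nonneg_left (by linarith) (norm_nonneg _)
        _ ≤ 1 := hbd1
    have hV1 : ‖(e.symm : EuclideanSpace ℝ (Fin d') →L[ℝ] EuclideanSpace ℝ (Fin d')) - 1‖ ≤
        (1 / (1 - k)) * (c₀ * ‖u‖) := by
      refine le_trans hbd2 ?_
      exact mul_le_mul hVbound (hBnorm y) (norm_nonneg _) (by positivity)
    refine ⟨hCD, ?_, ?_⟩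
    · rw [hfdS]; exact hVbound
    · rw [hfdS]; exact hV1
  refine ⟨hF, S, contDiff_iff_contDiffAt.mpr (fun z => (main z).1), hleft, hFS,
    (fun z => hSfix z), (fun z => (main z).2.1), ?_⟩
  intro z
  set V := fderiv ℝ S z with hVdef
  have h1 : ‖V‖ ≤ 1 / (1 - k) := (main z).2.1
  have h2 : ‖V - 1‖ ≤ (1 / (1 - k)) * (c₀ * ‖u‖) := (main z).2.2
  have hR0 : 0 < 1 / (1 - k) := by positivity
  have hmem1 : V ∈ closedBall
      (0 : EuclideanSpace ℝ (Fin d') →L[ℝ] EuclideanSpace ℝ (Fin d')) (1 / (1 - k) + 1) := by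
    rw [mem_closedBall_zero_iff]; linarith
  have hmem2 : (1 : EuclideanSpace ℝ (Fin d') →L[ℝ] EuclideanSpace ℝ (Fin d')) ∈ closedBall
      (0 : EuclideanSpace ℝ (Fin d') →L[ℝ] EuclideanSpace ℝ (Fin d')) (1 / (1 - k) + 1) := by
    rw [mem_closedBall_zero_iff, ContinuousLinearMap.one_def]
    have := ContinuousLinearMap.norm_id_le
      (𝕜 := ℝ) (E := EuclideanSpace ℝ (Fin d'))
    linarith
  have hlip := hLip V hmem1 1 hmem2
  have hdet1 : LinearMap.det
      ((1 : EuclideanSpace ℝ (Fin d') →L[ℝ] EuclideanSpace ℝ (Fin d')).toLinearMap) = 1 := by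
    rw [ContinuousLinearMap.one_def, ContinuousLinearMap.coe_id, LinearMap.det_id]
  calc |(|LinearMap.det V.toLinearMap| - 1)|
      ≤ |LinearMap.det V.toLinearMap - 1| := by
        have := abs_abs_sub_abs_le_abs_sub (LinearMap.det V.toLinearMap) 1
        simpa using this
    _ = |LinearMap.det V.toLinearMap - LinearMap.det
        ((1 : EuclideanSpace ℝ (Fin d') →L[ℝ] EuclideanSpace ℝ (Fin d')).toLinearMap)| := by
        rw [hdet1]
    _ ≤ L * ‖V - 1‖ := hlip
    _ ≤ L * ((1 / (1 - k)) * (c₀ * ‖u‖)) := mul_le_mul_of_nonneg_left h2 hL0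
    _ = (L * (c₀ / (1 - k))) * ‖u‖ := by ring
    _ ≤ (L * (c₀ / (1 - k)) + 1) * ‖u‖ :=
        mul_le_mul_of_nonneg_right (by linarith) (norm_nonneg u)
end
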